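/- arXiv:1705.00765 — 2 statements merged into one kernel-verified Lean document; each statement's English description precedes it below -/
import Mathlib

section
/- Let n ≥ 1 and let f : (0,∞) × ℝⁿ → ℝ be a smooth positive solution of the heat equation ∂f/∂t = Δf that is ℤⁿ-periodic in the space variable. Let v = −ln f − (n/2)ln(4πt) and W(t) = ∫_{[0,1]ⁿ} (t²|∇v(t,x)|² − 2nt) (4πt)^{−n/2} e^{−v(t,x)} dx. Then W is differentiable on (0,∞) and dW/dt = −2t² ∫_{[0,1]ⁿ} ( |∇²v − (1/t)I|² + |∇v|²/t ) (4πt)^{−n/2} e^{−v} dx, which is ≤ 0. -/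
open MeasureTheory Real

noncomputable section

/-- Partial derivative of `g` at `x` in the `i`-th coordinate direction. -/
def pd {n : ℕ} (i : Fin n) (g : (Fin n → ℝ) → ℝ) (x : Fin n → ℝ) : ℝ :=
  fderiv ℝ g x (Pi.single i 1)

/-- Squared Euclidean norm of the (spatial) gradient of `g` at `x`. -/
def gradSq {n : ℕ} (g : (Fin n → ℝ) → ℝ) (x : Fin n → ℝ) : ℝ :=
  ∑ i, (pd i g x) ^ 2

/-- The (spatial) Laplacian of `g` at `x`. -/
def lap {n : ℕ} (g : (Fin n → ℝ) → ℝ) (x : Fin n → ℝ) : ℝ :=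
  ∑ i, pd i (pd i g) x

/-- The `(i,j)` entry of the Hessian of `g` at `x`. -/
def hess {n : ℕ} (i j : Fin n) (g : (Fin n → ℝ) → ℝ) (x : Fin n → ℝ) : ℝ :=
  pd i (pd j g) x

namespace EAux

variable {n : ℕ}

/-- joint space derivative -/
def Dx (i : Fin n) (G : ℝ × (Fin n → ℝ) → ℝ) (p : ℝ × (Fin n → ℝ)) : ℝ :=
  fderiv ℝ G p ((0 : ℝ), Pi.single i 1)

/-- joint time derivative -/
def Dt (G : ℝ × (Fin n → ℝ) → ℝ) (p : ℝ × (Fin n → ℝ)) : ℝ :=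
  fderiv ℝ G p ((1 : ℝ), (0 : Fin n → ℝ))

def U (n : ℕ) : Set (ℝ × (Fin n → ℝ)) := Set.Ioi 0 ×ˢ Set.univ

lemma isOpen_U : IsOpen (U n) := isOpen_Ioi.prod isOpen_univ

lemma mem_U {t : ℝ} {x : Fin n → ℝ} (ht : 0 < t) : (t, x) ∈ U n := ⟨ht, trivial⟩

variable {G : ℝ × (Fin n → ℝ) → ℝ}

lemma contDiffAt_of_U (hG : ContDiffOn ℝ (⊤ : ℕ∞) G (U n)) {p : ℝ × (Fin n → ℝ)}
    (hp : p ∈ U n) : ContDiffAt ℝ (⊤ : ℕ∞) G p :=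
  hG.contDiffAt (isOpen_U.mem_nhds hp)


lemma one_le_coe_top : (1 : WithTop ℕ∞) ≤ ((⊤ : ℕ∞) : WithTop ℕ∞) := by
  exact_mod_cast le_top

lemma differentiableAt_of_U (hG : ContDiffOn ℝ (⊤ : ℕ∞) G (U n)) {p : ℝ × (Fin n → ℝ)}
    (hp : p ∈ U n) : DifferentiableAt ℝ G p :=
  (contDiffAt_of_U hG hp).differentiableAt (by simp)

lemma contDiffOn_fderiv (hG : ContDiffOn ℝ (⊤ : ℕ∞) G (U n)) :
    ContDiffOn ℝ (⊤ : ℕ∞) (fderiv ℝ G) (U n) := by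
  exact hG.fderiv_of_isOpen isOpen_U (by simp)

lemma contDiffOn_Dx (hG : ContDiffOn ℝ (⊤ : ℕ∞) G (U n)) (i : Fin n) :
    ContDiffOn ℝ (⊤ : ℕ∞) (Dx i G) (U n) :=
  (contDiffOn_fderiv hG).clm_apply contDiffOn_const

lemma contDiffOn_Dt (hG : ContDiffOn ℝ (⊤ : ℕ∞) G (U n)) :
    ContDiffOn ℝ (⊤ : ℕ∞) (Dt G) (U n) :=
  (contDiffOn_fderiv hG).clm_apply contDiffOn_const

/-- time slice derivative -/
lemma hasDerivAt_slice (hG : ContDiffOn ℝ (⊤ : ℕ∞) G (U n)) {t : ℝ} {x : Fin n → ℝ}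
    (ht : 0 < t) : HasDerivAt (fun s => G (s, x)) (Dt G (t, x)) t := by
  have hd : DifferentiableAt ℝ G (t, x) :=
    differentiableAt_of_U hG (mem_U ht)
  have h1 : HasDerivAt (fun s : ℝ => (s, x)) ((1 : ℝ), (0 : Fin n → ℝ)) t :=
    (hasDerivAt_id t).prodMk (hasDerivAt_const t x)
  exact hd.hasFDerivAt.comp_hasDerivAt t h1

/-- space slice derivative -/
lemma pd_slice (hG : ContDiffOn ℝ (⊤ : ℕ∞) G (U n)) (i : Fin n) {t : ℝ} {x : Fin n → ℝ}
    (ht : 0 < t) : pd i (fun y => G (t, y)) x = Dx i G (t, x) := by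
  have hd : DifferentiableAt ℝ G (t, x) :=
    differentiableAt_of_U hG (mem_U ht)
  have h1 : HasFDerivAt (fun y : Fin n → ℝ => ((t : ℝ), y))
      (ContinuousLinearMap.inr ℝ ℝ (Fin n → ℝ)) x :=
    (hasFDerivAt_const t x).prodMk (hasFDerivAt_id x)
  have h2 : HasFDerivAt (fun y => G (t, y))
      ((fderiv ℝ G (t, x)).comp (ContinuousLinearMap.inr ℝ ℝ (Fin n → ℝ))) x :=
    hd.hasFDerivAt.comp x h1
  simp [pd, h2.fderiv, Dx]

lemma contDiff_slice (hG : ContDiffOn ℝ (⊤ : ℕ∞) G (U n)) {t : ℝ} (ht : 0 < t) :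
    ContDiff ℝ (⊤ : ℕ∞) (fun y => G (t, y)) := by
  rw [← contDiffOn_univ]
  refine hG.comp (contDiff_const.prodMk contDiff_id).contDiffOn ?_
  intro y _
  exact mem_U ht

end EAux

namespace EAux2
open EAux

variable {n : ℕ} {G : ℝ × (Fin n → ℝ) → ℝ}

lemma two_le_coe_top : (2 : WithTop ℕ∞) ≤ ((⊤ : ℕ∞) : WithTop ℕ∞) := by
  have : ((2 : ℕ∞) : WithTop ℕ∞) ≤ ((⊤ : ℕ∞) : WithTop ℕ∞) := by exact_mod_cast le_top
  simpa using this

lemma fderiv_apply_fderiv (hG : ContDiffOn ℝ (⊤ : ℕ∞) G (U n)) {p : ℝ × (Fin n → ℝ)}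
    (hp : p ∈ U n) (v w : ℝ × (Fin n → ℝ)) :
    fderiv ℝ (fun q => fderiv ℝ G q v) p w = fderiv ℝ (fderiv ℝ G) p w v := by
  have hd : DifferentiableAt ℝ (fderiv ℝ G) p :=
    ((contDiffOn_fderiv hG).contDiffAt (isOpen_U.mem_nhds hp)).differentiableAt (by simp)
  have h := hd.hasFDerivAt.clm_apply (hasFDerivAt_const v p)
  rw [h.fderiv]
  simp

lemma commute_tx (hG : ContDiffOn ℝ (⊤ : ℕ∞) G (U n)) (i : Fin n) {p : ℝ × (Fin n → ℝ)}
    (hp : p ∈ U n) : Dt (Dx i G) p = Dx i (Dt G) p := by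
  have hsym : IsSymmSndFDerivAt ℝ G p :=
    (contDiffAt_of_U hG hp).isSymmSndFDerivAt (by simpa using two_le_coe_top)
  unfold Dt Dx
  rw [fderiv_apply_fderiv hG hp, fderiv_apply_fderiv hG hp]
  exact hsym _ _

end EAux2

section PdLemmas

variable {n : ℕ} {g : (Fin n → ℝ) → ℝ}

lemma pd_congr_fun {g₁ g₂ : (Fin n → ℝ) → ℝ} (h : ∀ y, g₁ y = g₂ y) (i : Fin n)
    (x : Fin n → ℝ) : pd i g₁ x = pd i g₂ x := by
  have : g₁ = g₂ := funext h
  rw [this]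

lemma HasFDerivAt.pd_eq {L : (Fin n → ℝ) →L[ℝ] ℝ} {x : Fin n → ℝ}
    (h : HasFDerivAt g L x) (i : Fin n) : pd i g x = L (Pi.single i 1) := by
  rw [pd, h.fderiv]

lemma ContDiff.contDiff_pd (hg : ContDiff ℝ (⊤ : ℕ∞) g) (i : Fin n) :
    ContDiff ℝ (⊤ : ℕ∞) (pd i g) := by
  have h1 : ContDiff ℝ (⊤ : ℕ∞) (fderiv ℝ g) := hg.fderiv_right (by simp)
  exact h1.clm_apply contDiff_const

lemma ContDiff.diffAt {n : ℕ} {g : (Fin n → ℝ) → ℝ} (hg : ContDiff ℝ (⊤ : ℕ∞) g)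
    (x : Fin n → ℝ) : DifferentiableAt ℝ g x :=
  (hg.differentiable (by simp)).differentiableAt

lemma ContDiff.diff_pd (hg : ContDiff ℝ (⊤ : ℕ∞) g) (i : Fin n) (x : Fin n → ℝ) :
    DifferentiableAt ℝ (pd i g) x :=
  ((hg.contDiff_pd i).differentiable (by simp)).differentiableAt

lemma ContDiff.hasFDerivAt_pd (hg : ContDiff ℝ (⊤ : ℕ∞) g) (i : Fin n) (x : Fin n → ℝ) :
    HasFDerivAt (pd i g) (fderiv ℝ (pd i g) x) x :=
  (hg.diff_pd i x).hasFDerivAt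

/-- symmetry of mixed second partials for smooth functions -/
lemma pd_comm (hg : ContDiff ℝ (⊤ : ℕ∞) g) (i j : Fin n) (x : Fin n → ℝ) :
    pd i (pd j g) x = pd j (pd i g) x := by
  have hsym : IsSymmSndFDerivAt ℝ g x :=
    (hg.contDiffAt).isSymmSndFDerivAt (by simpa using EAux2.two_le_coe_top)
  have key : ∀ v w : Fin n → ℝ, fderiv ℝ (fun q => fderiv ℝ g q v) x w
      = fderiv ℝ (fderiv ℝ g) x w v := by
    intro v w
    have hd : DifferentiableAt ℝ (fderiv ℝ g) x :=
      ((hg.fderiv_right (m := ((⊤ : ℕ∞) : WithTop ℕ∞)) (by simp)).differentiable (by simp)).differentiableAt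
    have h := hd.hasFDerivAt.clm_apply (hasFDerivAt_const v x)
    rw [h.fderiv]; simp
  have e1 : pd i (pd j g) x = fderiv ℝ (fun q => fderiv ℝ g q (Pi.single j 1)) x
      (Pi.single i 1) := rfl
  have e2 : pd j (pd i g) x = fderiv ℝ (fun q => fderiv ℝ g q (Pi.single i 1)) x
      (Pi.single j 1) := rfl
  rw [e1, e2, key, key]
  exact hsym _ _

end PdLemmas

section Periodic

variable {n : ℕ}

/-- periodicity of the derivative of a periodic function -/
lemma fderiv_add_of_periodic {g : (Fin n → ℝ) → ℝ} (hg : Differentiable ℝ g)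
    (c : Fin n → ℝ) (hper : ∀ y, g (y + c) = g y) (x : Fin n → ℝ) :
    fderiv ℝ g (x + c) = fderiv ℝ g x := by
  have h1 : HasFDerivAt (fun y => g (y + c)) (fderiv ℝ g (x + c)) x := by
    have := ((hg (x + c)).hasFDerivAt).comp x
      (((hasFDerivAt_id x).add_const c) : HasFDerivAt (fun y => y + c)
        (ContinuousLinearMap.id ℝ (Fin n → ℝ)) x)
    simpa [Function.comp_def] using this
  have h2 : (fun y => g (y + c)) = g := funext hper
  rw [h2] at h1
  rw [← h1.fderiv]

lemma pd_add_of_periodic {g : (Fin n → ℝ) → ℝ} (hg : Differentiable ℝ g)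
    (c : Fin n → ℝ) (hper : ∀ y, g (y + c) = g y) (i : Fin n) (x : Fin n → ℝ) :
    pd i g (x + c) = pd i g x := by
  rw [pd, pd, fderiv_add_of_periodic hg c hper]

/-- the divergence of a smooth periodic vector field integrates to zero over the unit cube -/
lemma integral_divergence_periodic_zero {m : ℕ} (Y : Fin (m + 1) → (Fin (m + 1) → ℝ) → ℝ)
    (hY : ∀ i, ContDiff ℝ (⊤ : ℕ∞) (Y i))
    (hper : ∀ i (x : Fin (m + 1) → ℝ) (k : Fin (m + 1) → ℤ),
      Y i (x + fun j => (k j : ℝ)) = Y i x) :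
    ∫ x in Set.Icc (0 : Fin (m + 1) → ℝ) 1, (∑ i, pd i (Y i) x) = 0 := by
  have hle : (0 : Fin (m + 1) → ℝ) ≤ 1 := fun i => zero_le_one
  have key := MeasureTheory.integral_divergence_of_hasFDerivAt_off_countable'
    (0 : Fin (m + 1) → ℝ) 1 hle Y (fun i x => fderiv ℝ (Y i) x) ∅ Set.countable_empty
    (fun i => (hY i).continuous.continuousOn)
    (fun x _ i => (((hY i).differentiable (by simp)) x).hasFDerivAt)
    (by
      apply Continuous.integrableOn_Icc
      exact continuous_finset_sum _ fun i _ => ((hY i).contDiff_pd i).continuous)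
  have hzero : ∀ i : Fin (m + 1),
      ((∫ x in Set.Icc ((0 : Fin (m+1) → ℝ) ∘ i.succAbove) ((1 : Fin (m+1) → ℝ) ∘ i.succAbove),
        Y i (i.insertNth ((1 : Fin (m+1) → ℝ) i) x)) -
       ∫ x in Set.Icc ((0 : Fin (m+1) → ℝ) ∘ i.succAbove) ((1 : Fin (m+1) → ℝ) ∘ i.succAbove),
        Y i (i.insertNth ((0 : Fin (m+1) → ℝ) i) x)) = 0 := by
    intro i
    have hpt : ∀ x : Fin m → ℝ, Y i (i.insertNth ((1 : Fin (m+1) → ℝ) i) x)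
        = Y i (i.insertNth ((0 : Fin (m+1) → ℝ) i) x) := by
      intro x
      have he : i.insertNth ((1 : Fin (m+1) → ℝ) i) x
          = i.insertNth ((0 : Fin (m+1) → ℝ) i) x
            + fun j => (((Pi.single i 1 : Fin (m+1) → ℤ) j : ℝ)) := by
        funext j
        rcases eq_or_ne j i with rfl | hj
        · simp
        · obtain ⟨k, rfl⟩ := Fin.exists_succAbove_eq hj
          simp [Fin.insertNth_apply_succAbove, Pi.single_eq_of_ne (Fin.succAbove_ne i k)]
      rw [he, hper]
    simp only [hpt, sub_self]
  simp only [pd]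
  rw [key, Finset.sum_eq_zero fun i _ => hzero i]

end Periodic

section PdCalc

variable {n : ℕ} {g₁ g₂ : (Fin n → ℝ) → ℝ} {x : Fin n → ℝ} {i : Fin n}

lemma pd_add (h₁ : DifferentiableAt ℝ g₁ x) (h₂ : DifferentiableAt ℝ g₂ x) :
    pd i (fun y => g₁ y + g₂ y) x = pd i g₁ x + pd i g₂ x := by
  rw [(h₁.hasFDerivAt.fun_add h₂.hasFDerivAt).pd_eq]; rfl

lemma pd_sub (h₁ : DifferentiableAt ℝ g₁ x) (h₂ : DifferentiableAt ℝ g₂ x) :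
    pd i (fun y => g₁ y - g₂ y) x = pd i g₁ x - pd i g₂ x := by
  rw [(h₁.hasFDerivAt.fun_sub h₂.hasFDerivAt).pd_eq]; rfl

lemma pd_neg (h₁ : DifferentiableAt ℝ g₁ x) :
    pd i (fun y => -(g₁ y)) x = -pd i g₁ x := by
  rw [h₁.hasFDerivAt.fun_neg.pd_eq]; rfl

lemma pd_const (c : ℝ) : pd i (fun _ => c) x = 0 := by
  rw [(hasFDerivAt_const c x).pd_eq]; rfl

lemma pd_mul (h₁ : DifferentiableAt ℝ g₁ x) (h₂ : DifferentiableAt ℝ g₂ x) :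
    pd i (fun y => g₁ y * g₂ y) x = pd i g₁ x * g₂ x + g₁ x * pd i g₂ x := by
  rw [(h₁.hasFDerivAt.fun_mul h₂.hasFDerivAt).pd_eq]
  simp [pd]
  ring

lemma pd_const_mul (c : ℝ) (h₁ : DifferentiableAt ℝ g₁ x) :
    pd i (fun y => c * g₁ y) x = c * pd i g₁ x := by
  rw [(h₁.hasFDerivAt.const_mul c).pd_eq]; simp [pd]

lemma pd_inv (h₁ : DifferentiableAt ℝ g₁ x) (hx : g₁ x ≠ 0) :
    pd i (fun y => (g₁ y)⁻¹) x = -pd i g₁ x / (g₁ x) ^ 2 := by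
  have h := (hasDerivAt_inv hx).comp_hasFDerivAt x h₁.hasFDerivAt
  have h' : HasFDerivAt (fun y => (g₁ y)⁻¹) (-(g₁ x ^ 2)⁻¹ • fderiv ℝ g₁ x) x := h
  rw [h'.pd_eq]
  simp [pd]
  field_simp

lemma pd_div (h₁ : DifferentiableAt ℝ g₁ x) (h₂ : DifferentiableAt ℝ g₂ x) (hx : g₂ x ≠ 0) :
    pd i (fun y => g₁ y / g₂ y) x
      = (pd i g₁ x * g₂ x - g₁ x * pd i g₂ x) / (g₂ x) ^ 2 := by
  have e : pd i (fun y => g₁ y / g₂ y) x = pd i (fun y => g₁ y * (g₂ y)⁻¹) x := by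
    apply pd_congr_fun; intro y; rw [div_eq_mul_inv]
  rw [e, pd_mul h₁ (h₂.fun_inv hx), pd_inv h₂ hx]
  field_simp
  ring

lemma pd_sq (h₁ : DifferentiableAt ℝ g₁ x) :
    pd i (fun y => (g₁ y) ^ 2) x = 2 * g₁ x * pd i g₁ x := by
  have := pd_mul (i := i) h₁ h₁
  have h : pd i (fun y => (g₁ y) ^ 2) x = pd i (fun y => g₁ y * g₁ y) x := by
    apply pd_congr_fun; intro y; ring
  rw [h, this]; ring

lemma pd_log (h₁ : DifferentiableAt ℝ g₁ x) (hx : g₁ x ≠ 0) :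
    pd i (fun y => Real.log (g₁ y)) x = pd i g₁ x / g₁ x := by
  rw [(h₁.hasFDerivAt.log hx).pd_eq]
  simp [pd]
  ring

lemma pd_finset_sum {ι : Type*} (s : Finset ι) {gs : ι → (Fin n → ℝ) → ℝ}
    (h : ∀ j ∈ s, DifferentiableAt ℝ (gs j) x) :
    pd i (fun y => ∑ j ∈ s, gs j y) x = ∑ j ∈ s, pd i (gs j) x := by
  rw [(HasFDerivAt.fun_sum fun j hj => (h j hj).hasFDerivAt).pd_eq]
  simp [pd]

end PdCalc

section Slice

variable {n : ℕ} {g : (Fin n → ℝ) → ℝ} (hg : ContDiff ℝ (⊤ : ℕ∞) g)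

/-- periodicity predicate -/
def IsPer {n : ℕ} (g : (Fin n → ℝ) → ℝ) : Prop :=
  ∀ (y : Fin n → ℝ) (m : Fin n → ℤ), g (y + fun k => (m k : ℝ)) = g y

lemma IsPer.pd (hper : IsPer g) (hg : ContDiff ℝ (⊤ : ℕ∞) g) (i : Fin n) :
    IsPer (pd i g) := fun y m =>
  pd_add_of_periodic (hg.differentiable (by simp)) _ (fun z => hper z m) i y

include hg

lemma contDiff_gradSq : ContDiff ℝ (⊤ : ℕ∞) (gradSq g) := by
  have : (gradSq g) = fun x => ∑ i, (pd i g x) ^ 2 := rfl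
  rw [this]
  exact ContDiff.sum fun i _ => (hg.contDiff_pd i).pow 2

lemma contDiff_lap : ContDiff ℝ (⊤ : ℕ∞) (lap g) := by
  have : (lap g) = fun x => ∑ i, pd i (pd i g) x := rfl
  rw [this]
  exact ContDiff.sum fun i _ => (hg.contDiff_pd i).contDiff_pd i

lemma pd_gradSq_eq (i : Fin n) (x : Fin n → ℝ) :
    pd i (gradSq g) x = ∑ j, 2 * pd j g x * pd i (pd j g) x := by
  have e : pd i (gradSq g) x = pd i (fun y => ∑ j, (pd j g y) ^ 2) x := rfl
  rw [e, pd_finset_sum _ fun j _ => ((hg.contDiff_pd j).pow 2).diffAt x]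
  exact Finset.sum_congr rfl fun j _ => pd_sq (hg.diff_pd j x)

lemma sum_pd_pd_pd (j : Fin n) (x : Fin n → ℝ) :
    ∑ i, pd i (pd i (pd j g)) x = pd j (lap g) x := by
  have e : pd j (lap g) x = pd j (fun y => ∑ i, pd i (pd i g) y) x := rfl
  rw [e, pd_finset_sum _ fun i _ => ((hg.contDiff_pd i).contDiff_pd i).diffAt x]
  refine Finset.sum_congr rfl fun i _ => ?_
  have h1 : pd j (pd i (pd i g)) x = pd i (pd j (pd i g)) x := pd_comm (hg.contDiff_pd i) j i x
  have h2 : pd j (pd i g) = pd i (pd j g) := funext fun y => pd_comm hg j i y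
  rw [h1, h2]

end Slice

/-- the function |∇g|²/g -/
def Qf {n : ℕ} (g : (Fin n → ℝ) → ℝ) : (Fin n → ℝ) → ℝ := fun y => gradSq g y / g y

section Slice2

variable {n : ℕ} {g : (Fin n → ℝ) → ℝ} (hg : ContDiff ℝ (⊤ : ℕ∞) g)
  (hpos : ∀ y, 0 < g y)

include hg hpos

lemma contDiff_Qf : ContDiff ℝ (⊤ : ℕ∞) (Qf g) :=
  (contDiff_gradSq hg).div hg fun y => (hpos y).ne'

lemma pd_Qf (i : Fin n) (x : Fin n → ℝ) :
    pd i (Qf g) x = (pd i (gradSq g) x * g x - gradSq g x * pd i g x) / (g x) ^ 2 :=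
  pd_div ((contDiff_gradSq hg).diffAt x) (hg.diffAt x) (hpos x).ne'

lemma pd_pd_Qf (i : Fin n) (x : Fin n → ℝ) :
    pd i (pd i (Qf g)) x =
      (((∑ j, 2 * ((pd i (pd j g) x) ^ 2 + pd j g x * pd i (pd i (pd j g)) x)) * g x
          - gradSq g x * pd i (pd i g) x) * (g x) ^ 2
        - (pd i (gradSq g) x * g x - gradSq g x * pd i g x) * (2 * g x * pd i g x))
        / ((g x) ^ 2) ^ 2 := by
  have hG := contDiff_gradSq hg
  have hGi : ContDiff ℝ (⊤ : ℕ∞) (pd i (gradSq g)) := hG.contDiff_pd i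
  have hbi : ContDiff ℝ (⊤ : ℕ∞) (pd i g) := hg.contDiff_pd i
  -- function-level formula for pd i (Qf g)
  have e1 : pd i (pd i (Qf g)) x
      = pd i (fun y => (pd i (gradSq g) y * g y - gradSq g y * pd i g y) / (g y) ^ 2) x :=
    pd_congr_fun (fun y => pd_Qf hg hpos i y) i x
  rw [e1]
  have hnum : DifferentiableAt ℝ
      (fun y => pd i (gradSq g) y * g y - gradSq g y * pd i g y) x :=
    ((hGi.diffAt x).mul (hg.diffAt x)).sub ((hG.diffAt x).mul (hbi.diffAt x))
  have hden : DifferentiableAt ℝ (fun y => (g y) ^ 2) x := (hg.pow 2).diffAt x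
  rw [pd_div hnum hden (pow_ne_zero 2 (hpos x).ne')]
  have hpnum : pd i (fun y => pd i (gradSq g) y * g y - gradSq g y * pd i g y) x
      = (∑ j, 2 * ((pd i (pd j g) x) ^ 2 + pd j g x * pd i (pd i (pd j g)) x)) * g x
          - gradSq g x * pd i (pd i g) x := by
    rw [pd_sub ((hGi.diffAt x).fun_mul (hg.diffAt x)) ((hG.diffAt x).fun_mul (hbi.diffAt x)),
      pd_mul (hGi.diffAt x) (hg.diffAt x), pd_mul (hG.diffAt x) (hbi.diffAt x)]
    have hpdGi : pd i (pd i (gradSq g)) x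
        = ∑ j, 2 * ((pd i (pd j g) x) ^ 2 + pd j g x * pd i (pd i (pd j g)) x) := by
      have e2 : pd i (pd i (gradSq g)) x
          = pd i (fun y => ∑ j, 2 * pd j g y * pd i (pd j g) y) x :=
        pd_congr_fun (fun y => pd_gradSq_eq hg i y) i x
      rw [e2, pd_finset_sum _ fun j _ =>
        ((contDiff_const.mul (hg.contDiff_pd j)).mul ((hg.contDiff_pd j).contDiff_pd i)).diffAt x]
      refine Finset.sum_congr rfl fun j _ => ?_
      have e3 : pd i (fun y => 2 * pd j g y * pd i (pd j g) y) x
          = pd i (fun y => 2 * (pd j g y * pd i (pd j g) y)) x := by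
        apply pd_congr_fun; intro y; ring
      rw [e3, pd_const_mul 2 (((hg.contDiff_pd j).mul
          ((hg.contDiff_pd j).contDiff_pd i)).diffAt x),
        pd_mul ((hg.contDiff_pd j).diffAt x) (((hg.contDiff_pd j).contDiff_pd i).diffAt x)]
      ring
    rw [hpdGi, pd_gradSq_eq hg i x]
    ring
  rw [hpnum, pd_sq (hg.diffAt x)]

omit hpos in
lemma isPer_gradSq (hper : IsPer g) : IsPer (gradSq g) := by
  intro y m
  have : ∀ j : Fin n, pd j g (y + fun k => (m k : ℝ)) = pd j g y :=
    fun j => hper.pd hg j y m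
  simp only [gradSq, this]

lemma isPer_Qf (hper : IsPer g) : IsPer (Qf g) := by
  intro y m
  show gradSq g (y + fun k => (m k : ℝ)) / g (y + fun k => (m k : ℝ)) = _
  rw [isPer_gradSq hg hper y m, hper y m]
  rfl

end Slice2

section DivZero

/-- The key divergence-theorem consequence: for smooth positive periodic `g`,
`∫ a·Δ(|∇g|²/g) + b·Δg = 0` over the unit cube. -/
lemma integral_lap_comb_zero {m : ℕ} {g : (Fin (m + 1) → ℝ) → ℝ}
    (hg : ContDiff ℝ (⊤ : ℕ∞) g) (hpos : ∀ y, 0 < g y) (hper : IsPer g) (a b : ℝ) :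
    ∫ x in Set.Icc (0 : Fin (m + 1) → ℝ) 1,
      (a * (∑ i, pd i (pd i (Qf g)) x) + b * lap g x) = 0 := by
  set Y : Fin (m + 1) → (Fin (m + 1) → ℝ) → ℝ :=
    fun i y => a * pd i (Qf g) y + b * pd i g y with hY
  have hQ : ContDiff ℝ (⊤ : ℕ∞) (Qf g) := contDiff_Qf hg hpos
  have hYsm : ∀ i, ContDiff ℝ (⊤ : ℕ∞) (Y i) := fun i =>
    (contDiff_const.mul (hQ.contDiff_pd i)).add (contDiff_const.mul (hg.contDiff_pd i))
  have hYper : ∀ i (x : Fin (m+1) → ℝ) (k : Fin (m+1) → ℤ),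
      Y i (x + fun j => (k j : ℝ)) = Y i x := by
    intro i x k
    have h1 := (isPer_Qf hg hpos hper).pd hQ i x k
    have h2 := hper.pd hg i x k
    simp only [hY, h1, h2]
  have key := integral_divergence_periodic_zero Y hYsm hYper
  have hEq : ∀ x : Fin (m+1) → ℝ, (∑ i, pd i (Y i) x)
      = a * (∑ i, pd i (pd i (Qf g)) x) + b * lap g x := by
    intro x
    have : ∀ i : Fin (m+1), pd i (Y i) x
        = a * pd i (pd i (Qf g)) x + b * pd i (pd i g) x := by
      intro i
      rw [hY]
      rw [pd_add ((contDiff_const.mul (hQ.contDiff_pd i)).diffAt x)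
        ((contDiff_const.mul (hg.contDiff_pd i)).diffAt x),
        pd_const_mul a ((hQ.contDiff_pd i).diffAt x),
        pd_const_mul b ((hg.contDiff_pd i).diffAt x)]
    rw [Finset.sum_congr rfl fun i _ => this i, Finset.sum_add_distrib,
      ← Finset.mul_sum, ← Finset.mul_sum]
    rfl
  rw [← key]
  exact setIntegral_congr_fun measurableSet_Icc fun x _ => (hEq x).symm

end DivZero

section SumAlg

variable {n : ℕ}

lemma sum_sub_diag_sq (h : Fin n → Fin n → ℝ) (r : ℝ) :
    ∑ i, ∑ j, (h i j - r * (if i = j then (1:ℝ) else 0)) ^ 2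
      = (∑ i, ∑ j, (h i j) ^ 2) - 2 * r * (∑ i, h i i) + n * r ^ 2 := by
  have e : ∀ i j : Fin n, (h i j - r * (if i = j then (1:ℝ) else 0)) ^ 2
      = (h i j) ^ 2 + (if i = j then (-(2 * r * h i j) + r ^ 2) else 0) := by
    intro i j
    rcases eq_or_ne i j with rfl | hij
    · simp; ring
    · simp [hij]
  simp only [e, Finset.sum_add_distrib, Finset.sum_ite_eq, Finset.mem_univ, if_true]
  simp only [Finset.sum_add_distrib, Finset.sum_neg_distrib, Finset.sum_const,
    Finset.card_univ, Fintype.card_fin, nsmul_eq_mul, ← Finset.mul_sum]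
  ring

end SumAlg

section Slice3

variable {n : ℕ} {g : (Fin n → ℝ) → ℝ} (hg : ContDiff ℝ (⊤ : ℕ∞) g)
  (hpos : ∀ y, 0 < g y)

include hg hpos

/-- the contracted divergence of `∇(|∇g|²/g)` in scalar atoms -/
lemma sum_pd_pd_Qf_eq (x : Fin n → ℝ) :
    ∑ i, pd i (pd i (Qf g)) x =
      ((2 * (∑ i, ∑ j, (pd i (pd j g) x) ^ 2)
          + 2 * (∑ j, pd j g x * pd j (lap g) x)) * (g x) ^ 3
        - gradSq g x * lap g x * (g x) ^ 2
        - 4 * (g x) ^ 2 * (∑ i, ∑ j, pd i (pd j g) x * pd i g x * pd j g x)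
        + 2 * (gradSq g x) ^ 2 * (g x)) / (g x) ^ 4 := by
  have key : ∀ i : Fin n, pd i (pd i (Qf g)) x =
      ((∑ j, (2 * (pd i (pd j g) x) ^ 2 * (g x) ^ 3
          + 2 * (pd j g x * pd i (pd i (pd j g)) x) * (g x) ^ 3
          - 4 * (g x) ^ 2 * (pd i (pd j g) x * pd i g x * pd j g x)))
        - gradSq g x * pd i (pd i g) x * (g x) ^ 2
        + 2 * gradSq g x * (pd i g x) ^ 2 * (g x)) / (g x) ^ 4 := by
    intro i
    rw [pd_pd_Qf hg hpos i x, pd_gradSq_eq hg i x]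
    have r1 : ∑ j, 2 * ((pd i (pd j g) x) ^ 2 + pd j g x * pd i (pd i (pd j g)) x)
        = 2 * (∑ j, (pd i (pd j g) x) ^ 2)
          + 2 * (∑ j, pd j g x * pd i (pd i (pd j g)) x) := by
      rw [← Finset.mul_sum, Finset.sum_add_distrib]
      ring
    have r2 : ∑ j, 2 * pd j g x * pd i (pd j g) x
        = 2 * (∑ j, pd j g x * pd i (pd j g) x) := by
      rw [Finset.mul_sum]
      exact Finset.sum_congr rfl fun j _ => by ring
    have r3 : ∑ j, (2 * (pd i (pd j g) x) ^ 2 * (g x) ^ 3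
          + 2 * (pd j g x * pd i (pd i (pd j g)) x) * (g x) ^ 3
          - 4 * (g x) ^ 2 * (pd i (pd j g) x * pd i g x * pd j g x))
        = 2 * (∑ j, (pd i (pd j g) x) ^ 2) * (g x) ^ 3
          + 2 * (∑ j, pd j g x * pd i (pd i (pd j g)) x) * (g x) ^ 3
          - 4 * (g x) ^ 2 * pd i g x * (∑ j, pd j g x * pd i (pd j g) x) := by
      simp only [Finset.sum_sub_distrib, Finset.sum_add_distrib]
      congr 1
      · congr 1
        · rw [Finset.mul_sum, Finset.sum_mul]
        · rw [Finset.mul_sum, Finset.sum_mul]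
      · rw [Finset.mul_sum]
        exact Finset.sum_congr rfl fun j _ => by ring
    rw [r1, r2, r3]
    rw [div_eq_div_iff (pow_ne_zero 2 (pow_ne_zero 2 (hpos x).ne')) (pow_ne_zero 4 (hpos x).ne')]
    ring
  rw [Finset.sum_congr rfl fun i _ => key i, ← Finset.sum_div]
  congr 1
  have swap : ∑ i : Fin n, ∑ j, 2 * (pd j g x * pd i (pd i (pd j g)) x) * (g x) ^ 3
      = 2 * (∑ j, pd j g x * pd j (lap g) x) * (g x) ^ 3 := by
    rw [Finset.sum_comm]
    rw [Finset.mul_sum, Finset.sum_mul]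
    refine Finset.sum_congr rfl fun j _ => ?_
    rw [← sum_pd_pd_pd hg j x]
    simp only [Finset.mul_sum, Finset.sum_mul]
  simp only [Finset.sum_sub_distrib, Finset.sum_add_distrib]
  rw [swap]
  have hgsq : ∑ i : Fin n, 2 * gradSq g x * (pd i g x) ^ 2 * (g x)
      = 2 * (gradSq g x) ^ 2 * g x := by
    rw [← Finset.sum_mul, ← Finset.mul_sum]
    have : ∑ i : Fin n, (pd i g x) ^ 2 = gradSq g x := rfl
    rw [this]; ring
  have hlap : ∑ i : Fin n, gradSq g x * pd i (pd i g) x * (g x) ^ 2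
      = gradSq g x * lap g x * (g x) ^ 2 := by
    rw [← Finset.sum_mul, ← Finset.mul_sum]
    have : ∑ i : Fin n, pd i (pd i g) x = lap g x := rfl
    rw [this]
  rw [hgsq, hlap]
  simp only [Finset.sum_sub_distrib, Finset.sum_add_distrib, ← Finset.mul_sum,
    ← Finset.sum_mul]
  ring

end Slice3

section Slice4

variable {n : ℕ} {g : (Fin n → ℝ) → ℝ} (hg : ContDiff ℝ (⊤ : ℕ∞) g)
  (hpos : ∀ y, 0 < g y)

include hg hpos

lemma pd_v_eq (c : ℝ) (j : Fin n) (x : Fin n → ℝ) :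
    pd j (fun y => -Real.log (g y) - c) x = -(pd j g x / g x) := by
  have hd : DifferentiableAt ℝ (fun y => -Real.log (g y)) x :=
    ((hg.diffAt x).log (hpos x).ne').neg
  have e : pd j (fun y => -Real.log (g y) - c) x
      = pd j (fun y => -Real.log (g y)) x - pd j (fun _ => c) x :=
    pd_sub hd (differentiableAt_const c)
  rw [e, pd_const, pd_neg ((hg.diffAt x).log (hpos x).ne'), pd_log (hg.diffAt x) (hpos x).ne']
  ring

lemma hess_v_eq (c : ℝ) (i j : Fin n) (x : Fin n → ℝ) :
    pd i (pd j (fun y => -Real.log (g y) - c)) x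
      = (pd i g x * pd j g x - pd i (pd j g) x * g x) / (g x) ^ 2 := by
  have e1 : pd i (pd j (fun y => -Real.log (g y) - c)) x
      = pd i (fun y => -(pd j g y / g y)) x :=
    pd_congr_fun (fun y => pd_v_eq hg hpos c j y) i x
  rw [e1, pd_neg (((hg.contDiff_pd j).fun_div hg fun y => (hpos y).ne').diffAt x),
    pd_div ((hg.contDiff_pd j).diffAt x) (hg.diffAt x) (hpos x).ne']
  field_simp
  ring

lemma gradSq_v_eq (c : ℝ) (x : Fin n → ℝ) :
    gradSq (fun y => -Real.log (g y) - c) x = gradSq g x / (g x) ^ 2 := by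
  have e : ∀ j : Fin n, (pd j (fun y => -Real.log (g y) - c) x) ^ 2
      = (pd j g x) ^ 2 / (g x) ^ 2 := by
    intro j
    rw [pd_v_eq hg hpos c j x]
    field_simp
  show (∑ j, (pd j (fun y => -Real.log (g y) - c) x) ^ 2) = _
  rw [Finset.sum_congr rfl fun j _ => e j, ← Finset.sum_div]
  rfl

/-- the target integrand of the entropy formula, in scalar atoms -/
lemma I2_eq (c t : ℝ) (ht : t ≠ 0) (x : Fin n → ℝ) :
    ((∑ i, ∑ j, (hess i j (fun y => -Real.log (g y) - c) x
        - (1 / t) * (if i = j then (1:ℝ) else 0)) ^ 2)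
      + gradSq (fun y => -Real.log (g y) - c) x / t) * g x
    = (((gradSq g x) ^ 2 - 2 * (g x) * (∑ i, ∑ j, pd i (pd j g) x * pd i g x * pd j g x)
          + (g x) ^ 2 * (∑ i, ∑ j, (pd i (pd j g) x) ^ 2)) / (g x) ^ 4
        - (2 / t) * ((gradSq g x - lap g x * g x) / (g x) ^ 2)
        + n * (1 / t) ^ 2 + (gradSq g x / (g x) ^ 2) / t) * g x := by
  have hA := (hpos x).ne'
  rw [sum_sub_diag_sq (fun i j => hess i j (fun y => -Real.log (g y) - c) x) (1/t)]
  have e1 : ∑ i, ∑ j : Fin n, (hess i j (fun y => -Real.log (g y) - c) x) ^ 2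
      = ((gradSq g x) ^ 2 - 2 * (g x) * (∑ i, ∑ j, pd i (pd j g) x * pd i g x * pd j g x)
          + (g x) ^ 2 * (∑ i, ∑ j, (pd i (pd j g) x) ^ 2)) / (g x) ^ 4 := by
    have he : ∀ i j : Fin n, (hess i j (fun y => -Real.log (g y) - c) x) ^ 2
        = ((pd i g x) ^ 2 * (pd j g x) ^ 2
            - 2 * g x * (pd i (pd j g) x * pd i g x * pd j g x)
            + (g x) ^ 2 * (pd i (pd j g) x) ^ 2) / (g x) ^ 4 := by
      intro i j
      rw [hess, hess_v_eq hg hpos c i j x]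
      rw [div_pow, div_eq_div_iff (pow_ne_zero _ (pow_ne_zero _ hA)) (pow_ne_zero _ hA)]
      ring
    rw [Finset.sum_congr rfl fun i _ => Finset.sum_congr rfl fun j _ => he i j]
    simp only [← Finset.sum_div, Finset.sum_add_distrib, Finset.sum_sub_distrib]
    congr 2
    · congr 1
      · -- ∑ i ∑ j bᵢ²bⱼ² = G²
        have : ∀ i : Fin n, ∑ j : Fin n, (pd i g x) ^ 2 * (pd j g x) ^ 2
            = (pd i g x) ^ 2 * gradSq g x := fun i => by
          rw [← Finset.mul_sum]; rfl
        rw [Finset.sum_congr rfl fun i _ => this i, ← Finset.sum_mul]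
        have : (∑ i : Fin n, (pd i g x) ^ 2) = gradSq g x := rfl
        rw [this]; ring
      · simp only [← Finset.mul_sum]
    · simp only [← Finset.mul_sum]
  have e2 : ∑ i : Fin n, hess i i (fun y => -Real.log (g y) - c) x
      = (gradSq g x - lap g x * g x) / (g x) ^ 2 := by
    have he : ∀ i : Fin n, hess i i (fun y => -Real.log (g y) - c) x
        = ((pd i g x) ^ 2 - pd i (pd i g) x * g x) / (g x) ^ 2 := by
      intro i
      rw [hess, hess_v_eq hg hpos c i i x]
      ring_nf
    rw [Finset.sum_congr rfl fun i _ => he i, ← Finset.sum_div, Finset.sum_sub_distrib,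
      ← Finset.sum_mul]
    rfl
  rw [e1, e2, gradSq_v_eq hg hpos c x]
  ring

end Slice4

namespace EAux

variable {n : ℕ}

def FJ (f : ℝ → (Fin n → ℝ) → ℝ) : ℝ × (Fin n → ℝ) → ℝ := fun p => f p.1 p.2

def uJ (f : ℝ → (Fin n → ℝ) → ℝ) (j : Fin n) : ℝ × (Fin n → ℝ) → ℝ := Dx j (FJ f)

def lapJ (f : ℝ → (Fin n → ℝ) → ℝ) : ℝ × (Fin n → ℝ) → ℝ :=
  fun p => ∑ i, Dx i (uJ f i) p

def SJ (f : ℝ → (Fin n → ℝ) → ℝ) : ℝ × (Fin n → ℝ) → ℝ :=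
  fun p => ∑ j, (uJ f j p) ^ 2

def SJ' (f : ℝ → (Fin n → ℝ) → ℝ) : ℝ × (Fin n → ℝ) → ℝ :=
  fun p => ∑ j, 2 * uJ f j p * Dx j (lapJ f) p

def PhiJ (f : ℝ → (Fin n → ℝ) → ℝ) : ℝ × (Fin n → ℝ) → ℝ :=
  fun p => p.1 ^ 2 * (SJ f p / FJ f p) - 2 * (n : ℝ) * (p.1 * FJ f p)

def DPhiJ (f : ℝ → (Fin n → ℝ) → ℝ) : ℝ × (Fin n → ℝ) → ℝ :=
  fun p => 2 * p.1 * (SJ f p / FJ f p)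
    + p.1 ^ 2 * ((SJ' f p * FJ f p - SJ f p * lapJ f p) / (FJ f p) ^ 2)
    - 2 * (n : ℝ) * FJ f p - 2 * (n : ℝ) * p.1 * lapJ f p

section Joint

variable {f : ℝ → (Fin n → ℝ) → ℝ}
  (hsm : ContDiffOn ℝ (⊤ : ℕ∞) (FJ f) (U n))
  (hfpos : ∀ t > (0:ℝ), ∀ x : Fin n → ℝ, 0 < f t x)
  (hheat : ∀ t > (0:ℝ), ∀ x : Fin n → ℝ, deriv (fun s => f s x) t = lap (f t) x)

include hsm

lemma contDiffOn_uJ (j : Fin n) : ContDiffOn ℝ (⊤ : ℕ∞) (uJ f j) (U n) :=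
  contDiffOn_Dx hsm j

lemma contDiffOn_lapJ : ContDiffOn ℝ (⊤ : ℕ∞) (lapJ f) (U n) := by
  have : (lapJ f) = fun p => ∑ i, Dx i (uJ f i) p := rfl
  rw [this]
  exact ContDiffOn.sum fun i _ => contDiffOn_Dx (contDiffOn_uJ hsm i) i

lemma contDiffOn_SJ : ContDiffOn ℝ (⊤ : ℕ∞) (SJ f) (U n) := by
  have : (SJ f) = fun p => ∑ j, (uJ f j p) ^ 2 := rfl
  rw [this]
  exact ContDiffOn.sum fun j _ => (contDiffOn_uJ hsm j).pow 2

lemma contDiffOn_SJ' : ContDiffOn ℝ (⊤ : ℕ∞) (SJ' f) (U n) := by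
  have : (SJ' f) = fun p => ∑ j, 2 * uJ f j p * Dx j (lapJ f) p := rfl
  rw [this]
  exact ContDiffOn.sum fun j _ =>
    (contDiffOn_const.mul (contDiffOn_uJ hsm j)).mul (contDiffOn_Dx (contDiffOn_lapJ hsm) j)

/-- slice identifications -/
lemma pd_slice_uJ (j : Fin n) {t : ℝ} (ht : 0 < t) (x : Fin n → ℝ) :
    pd j (f t) x = uJ f j (t, x) :=
  pd_slice hsm j ht

lemma pd_pd_slice (i j : Fin n) {t : ℝ} (ht : 0 < t) (x : Fin n → ℝ) :
    pd i (pd j (f t)) x = Dx i (uJ f j) (t, x) := by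
  have e : pd i (pd j (f t)) x = pd i (fun y => uJ f j (t, y)) x :=
    pd_congr_fun (fun y => pd_slice_uJ hsm j ht y) i x
  rw [e, pd_slice (contDiffOn_uJ hsm j) i ht]

lemma lap_slice {t : ℝ} (ht : 0 < t) (x : Fin n → ℝ) :
    lap (f t) x = lapJ f (t, x) := by
  show (∑ i, pd i (pd i (f t)) x) = ∑ i, Dx i (uJ f i) (t, x)
  exact Finset.sum_congr rfl fun i _ => pd_pd_slice hsm i i ht x

lemma gradSq_slice {t : ℝ} (ht : 0 < t) (x : Fin n → ℝ) :
    gradSq (f t) x = SJ f (t, x) := by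
  show (∑ j, (pd j (f t) x) ^ 2) = ∑ j, (uJ f j (t, x)) ^ 2
  exact Finset.sum_congr rfl fun j _ => by rw [pd_slice_uJ hsm j ht x]

lemma pd_lap_slice (j : Fin n) {t : ℝ} (ht : 0 < t) (x : Fin n → ℝ) :
    pd j (lap (f t)) x = Dx j (lapJ f) (t, x) := by
  have e : pd j (lap (f t)) x = pd j (fun y => lapJ f (t, y)) x :=
    pd_congr_fun (fun y => lap_slice hsm ht y) j x
  rw [e, pd_slice (contDiffOn_lapJ hsm) j ht]

include hheat

/-- the heat equation at the joint level -/
lemma heatJ {p : ℝ × (Fin n → ℝ)} (hp : p ∈ U n) : Dt (FJ f) p = lapJ f p := by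
  obtain ⟨t, x⟩ := p
  have ht : 0 < t := hp.1
  have h := hasDerivAt_slice hsm ht (x := x)
  have h2 : deriv (fun s => FJ f (s, x)) t = Dt (FJ f) (t, x) := h.deriv
  have h3 : (fun s => FJ f (s, x)) = fun s => f s x := rfl
  rw [h3] at h2
  rw [← h2, hheat t ht x, lap_slice hsm ht x]

/-- time derivative of the space derivative -/
lemma hasDerivAt_uJ (j : Fin n) {t : ℝ} (ht : 0 < t) (x : Fin n → ℝ) :
    HasDerivAt (fun s => uJ f j (s, x)) (Dx j (lapJ f) (t, x)) t := by
  have h := hasDerivAt_slice (contDiffOn_uJ hsm j) ht (x := x)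
  have e1 : Dt (uJ f j) (t, x) = Dx j (Dt (FJ f)) (t, x) :=
    EAux2.commute_tx hsm j (mem_U ht)
  have e2 : Dx j (Dt (FJ f)) (t, x) = Dx j (lapJ f) (t, x) := by
    unfold Dx
    congr 1
    refine Filter.EventuallyEq.fderiv_eq ?_
    refine Filter.eventuallyEq_of_mem (isOpen_U.mem_nhds (mem_U ht)) ?_
    intro q hq
    exact heatJ hsm hheat hq
  rw [e1, e2] at h
  exact h

end Joint

end EAux

namespace EAux

section Joint2

variable {n : ℕ} {f : ℝ → (Fin n → ℝ) → ℝ}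
  (hsm : ContDiffOn ℝ (⊤ : ℕ∞) (FJ f) (U n))
  (hfpos : ∀ t > (0:ℝ), ∀ x : Fin n → ℝ, 0 < f t x)
  (hheat : ∀ t > (0:ℝ), ∀ x : Fin n → ℝ, deriv (fun s => f s x) t = lap (f t) x)

include hsm hfpos hheat

lemma hasDerivAt_PhiJ {t : ℝ} (ht : 0 < t) (x : Fin n → ℝ) :
    HasDerivAt (fun s => PhiJ f (s, x)) (DPhiJ f (t, x)) t := by
  have hFpos : 0 < FJ f (t, x) := hfpos t ht x
  have hu : HasDerivAt (fun s => FJ f (s, x)) (lapJ f (t, x)) t := by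
    have h := hasDerivAt_slice hsm ht (x := x)
    rwa [heatJ hsm hheat (mem_U ht)] at h
  have hS : HasDerivAt (fun s => SJ f (s, x)) (SJ' f (t, x)) t := by
    have h : HasDerivAt (fun s => ∑ j, (uJ f j (s, x)) ^ 2)
        (∑ j, (2:ℕ) * (uJ f j (t, x)) ^ 1 * Dx j (lapJ f) (t, x)) t :=
      HasDerivAt.fun_sum fun j _ => (hasDerivAt_uJ hsm hheat j ht x).fun_pow 2
    have e : (∑ j, (2:ℕ) * (uJ f j (t, x)) ^ 1 * Dx j (lapJ f) (t, x)) = SJ' f (t, x) := by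
      refine Finset.sum_congr rfl fun j _ => ?_
      push_cast
      ring
    rw [e] at h
    exact h
  have hq : HasDerivAt (fun s => SJ f (s, x) / FJ f (s, x))
      ((SJ' f (t, x) * FJ f (t, x) - SJ f (t, x) * lapJ f (t, x)) / (FJ f (t, x)) ^ 2) t :=
    hS.div hu hFpos.ne'
  have h1 : HasDerivAt (fun s : ℝ => s ^ 2 * (SJ f (s, x) / FJ f (s, x)))
      ((2:ℕ) * t ^ 1 * (SJ f (t, x) / FJ f (t, x))
        + t ^ 2 * ((SJ' f (t, x) * FJ f (t, x) - SJ f (t, x) * lapJ f (t, x))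
            / (FJ f (t, x)) ^ 2)) t :=
    ((hasDerivAt_pow 2 t).mul hq)
  have h2 : HasDerivAt (fun s : ℝ => 2 * (n : ℝ) * (s * FJ f (s, x)))
      (2 * (n : ℝ) * (1 * FJ f (t, x) + t * lapJ f (t, x))) t :=
    ((hasDerivAt_id t).mul hu).const_mul (2 * (n : ℝ))
  have h3 := h1.sub h2
  have e : ((2:ℕ) * t ^ 1 * (SJ f (t, x) / FJ f (t, x))
        + t ^ 2 * ((SJ' f (t, x) * FJ f (t, x) - SJ f (t, x) * lapJ f (t, x))
            / (FJ f (t, x)) ^ 2))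
      - 2 * (n : ℝ) * (1 * FJ f (t, x) + t * lapJ f (t, x)) = DPhiJ f (t, x) := by
    show _ = 2 * t * (SJ f (t, x) / FJ f (t, x))
      + t ^ 2 * ((SJ' f (t, x) * FJ f (t, x) - SJ f (t, x) * lapJ f (t, x)) / (FJ f (t, x)) ^ 2)
      - 2 * (n : ℝ) * FJ f (t, x) - 2 * (n : ℝ) * t * lapJ f (t, x)
    push_cast
    ring
  rw [e] at h3
  exact h3

lemma continuousOn_DPhiJ : ContinuousOn (DPhiJ f) (U n) := by
  have hF : ContinuousOn (FJ f) (U n) := hsm.continuousOn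
  have hS : ContinuousOn (SJ f) (U n) := (contDiffOn_SJ hsm).continuousOn
  have hS' : ContinuousOn (SJ' f) (U n) := (contDiffOn_SJ' hsm).continuousOn
  have hL : ContinuousOn (lapJ f) (U n) := (contDiffOn_lapJ hsm).continuousOn
  have ht1 : ContinuousOn (fun p : ℝ × (Fin n → ℝ) => p.1) (U n) := continuous_fst.continuousOn
  have hFne : ∀ p ∈ U n, FJ f p ≠ 0 := by
    rintro ⟨t, x⟩ hp
    exact (hfpos t hp.1 x).ne'
  have hFne2 : ∀ p ∈ U n, (FJ f p) ^ 2 ≠ 0 := fun p hp => pow_ne_zero 2 (hFne p hp)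
  exact ((((continuousOn_const.mul ht1).mul (hS.div hF hFne)).add
    ((ht1.pow 2).mul (((hS'.mul hF).sub (hS.mul hL)).div (hF.pow 2) hFne2))).sub
    (continuousOn_const.mul hF)).sub ((continuousOn_const.mul ht1).mul hL)

end Joint2

end EAux

namespace EAux

section Joint3

variable {n : ℕ} {f : ℝ → (Fin n → ℝ) → ℝ}
  (hsm : ContDiffOn ℝ (⊤ : ℕ∞) (FJ f) (U n))
  (hfpos : ∀ t > (0:ℝ), ∀ x : Fin n → ℝ, 0 < f t x)
  (hheat : ∀ t > (0:ℝ), ∀ x : Fin n → ℝ, deriv (fun s => f s x) t = lap (f t) x)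

lemma continuous_slice_of_continuousOn {H : ℝ × (Fin n → ℝ) → ℝ}
    (hH : ContinuousOn H (U n)) {s : ℝ} (hs : 0 < s) :
    Continuous (fun x => H (s, x)) := by
  have hmap : ∀ x : Fin n → ℝ, (s, x) ∈ U n := fun x => mem_U hs
  exact hH.comp_continuous (continuous_const.prodMk continuous_id) hmap

include hsm hfpos hheat

lemma continuousOn_PhiJ : ContinuousOn (PhiJ f) (U n) := by
  have hF : ContinuousOn (FJ f) (U n) := hsm.continuousOn
  have hS : ContinuousOn (SJ f) (U n) := (contDiffOn_SJ hsm).continuousOn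
  have ht1 : ContinuousOn (fun p : ℝ × (Fin n → ℝ) => p.1) (U n) := continuous_fst.continuousOn
  have hFne : ∀ p ∈ U n, FJ f p ≠ 0 := by
    rintro ⟨t, x⟩ hp
    exact (hfpos t hp.1 x).ne'
  exact ((ht1.pow 2).mul (hS.div hF hFne)).sub (continuousOn_const.mul (ht1.mul hF))

lemma hasDerivAt_intPhiJ {t : ℝ} (ht : 0 < t) :
    HasDerivAt (fun s => ∫ x in Set.Icc (0 : Fin n → ℝ) 1, PhiJ f (s, x))
      (∫ x in Set.Icc (0 : Fin n → ℝ) 1, DPhiJ f (t, x)) t := by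
  set μ := volume.restrict (Set.Icc (0 : Fin n → ℝ) 1) with hμ
  set K : Set (ℝ × (Fin n → ℝ)) :=
    Set.Icc (t/2) (3*t/2) ×ˢ Set.Icc (0 : Fin n → ℝ) 1 with hK
  have hKcomp : IsCompact K := isCompact_Icc.prod isCompact_Icc
  have hKU : K ⊆ U n := by
    rintro ⟨s, x⟩ ⟨hs, _⟩
    exact mem_U (lt_of_lt_of_le (by linarith) hs.1)
  obtain ⟨C, hC⟩ := hKcomp.exists_bound_of_continuousOn
    ((continuousOn_DPhiJ hsm hfpos hheat).mono hKU)
  have hball : ∀ s ∈ Metric.ball t (t/4), 0 < s ∧ s ∈ Set.Icc (t/2) (3*t/2) := by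
    intro s hs
    rw [Metric.mem_ball, Real.dist_eq, abs_lt] at hs
    constructor
    · linarith [hs.1, hs.2]
    · constructor <;> [linarith [hs.1]; linarith [hs.2]]
  have key := hasDerivAt_integral_of_dominated_loc_of_deriv_le (μ := μ)
    (F := fun s x => PhiJ f (s, x)) (F' := fun s x => DPhiJ f (s, x))
    (bound := fun _ => C) (x₀ := t) (s := Metric.ball t (t/4)) (Metric.ball_mem_nhds t (by positivity))
    ?_ ?_ ?_ ?_ ?_ ?_
  · exact key.2
  · filter_upwards [eventually_gt_nhds ht] with s hs
    exact (continuous_slice_of_continuousOn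
      (continuousOn_PhiJ hsm hfpos hheat) hs).aestronglyMeasurable
  · exact (continuous_slice_of_continuousOn
      (continuousOn_PhiJ hsm hfpos hheat) ht).integrableOn_Icc
  · exact (continuous_slice_of_continuousOn
      (continuousOn_DPhiJ hsm hfpos hheat) ht).aestronglyMeasurable
  · refine Filter.eventually_of_mem (self_mem_ae_restrict measurableSet_Icc) ?_
    intro x hx s hs
    exact hC (s, x) ⟨(hball s hs).2, hx⟩
  · exact integrableOn_const isCompact_Icc.measure_lt_top.ne
  · exact Filter.Eventually.of_forall fun x s hs =>
      hasDerivAt_PhiJ hsm hfpos hheat (hball s hs).1 x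

end Joint3

end EAux

section Final

lemma weight_eq {a A : ℝ} (ha : 0 < a) (hA : 0 < A) (N : ℝ) :
    A ^ (-N / 2) * Real.exp (-(-Real.log a - N / 2 * Real.log A)) = a := by
  have h1 : -(-Real.log a - N / 2 * Real.log A) = Real.log a + N / 2 * Real.log A := by ring
  rw [h1, Real.exp_add, Real.exp_log ha]
  have h2 : Real.exp (N / 2 * Real.log A) = A ^ (N / 2) := by
    rw [Real.rpow_def_of_pos hA, mul_comm]
  rw [h2, mul_comm a _, ← mul_assoc, ← Real.rpow_add hA]
  rw [show -N / 2 + N / 2 = 0 by ring, Real.rpow_zero, one_mul]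

lemma grand_identity (A G L M B S2 N t : ℝ) (hA : A ≠ 0) (ht : t ≠ 0) :
    2 * t * (G / A) + t ^ 2 * ((2 * S2 * A - G * L) / A ^ 2) - 2 * N * A - 2 * N * t * L
    = -2 * t ^ 2 * (((G ^ 2 - 2 * A * B + A ^ 2 * M) / A ^ 4
          - (2 / t) * ((G - L * A) / A ^ 2) + N * (1 / t) ^ 2 + (G / A ^ 2) / t) * A)
      + (t ^ 2 * (((2 * M + 2 * S2) * A ^ 3 - G * L * A ^ 2 - 4 * A ^ 2 * B + 2 * G ^ 2 * A)
            / A ^ 4)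
        + (4 - 2 * N) * t * L) := by
  field_simp
  ring

end Final


open EAux in
/-- Derivative formula for the entropy `W`:
`dW/dt = −2t² ∫ (|∇²v − (1/t)I|² + |∇v|²/t) (4πt)^{−n/2} e^{−v} ≤ 0`. -/
theorem entropy_W_deriv
    (n : ℕ) (hn : 1 ≤ n) (f : ℝ → (Fin n → ℝ) → ℝ)
    (hsmooth : ContDiffOn ℝ (⊤ : ℕ∞) (fun p : ℝ × (Fin n → ℝ) => f p.1 p.2)
      (Set.Ioi 0 ×ˢ Set.univ))
    (hpos : ∀ t > (0:ℝ), ∀ x : Fin n → ℝ, 0 < f t x)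
    (hheat : ∀ t > (0:ℝ), ∀ x : Fin n → ℝ, deriv (fun s => f s x) t = lap (f t) x)
    (hper : ∀ t > (0:ℝ), ∀ x : Fin n → ℝ, ∀ m : Fin n → ℤ,
      f t (x + fun i => (m i : ℝ)) = f t x)
    (v : ℝ → (Fin n → ℝ) → ℝ)
    (hv : ∀ t x, v t x = -Real.log (f t x) - (n / 2 : ℝ) * Real.log (4 * π * t))
    (W : ℝ → ℝ)
    (hW : ∀ t, W t = ∫ x in Set.Icc (0 : Fin n → ℝ) 1,
      (t ^ 2 * gradSq (v t) x - 2 * n * t) *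
        ((4 * π * t) ^ (-(n : ℝ) / 2) * Real.exp (-(v t x)))) :
    ∀ t > (0:ℝ),
      HasDerivAt W
        (-2 * t ^ 2 * ∫ x in Set.Icc (0 : Fin n → ℝ) 1,
          ((∑ i, ∑ j, (hess i j (v t) x - (1 / t) * (if i = j then (1:ℝ) else 0)) ^ 2)
            + gradSq (v t) x / t) *
            ((4 * π * t) ^ (-(n : ℝ) / 2) * Real.exp (-(v t x)))) t ∧
      (-2 * t ^ 2 * ∫ x in Set.Icc (0 : Fin n → ℝ) 1,
          ((∑ i, ∑ j, (hess i j (v t) x - (1 / t) * (if i = j then (1:ℝ) else 0)) ^ 2)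
            + gradSq (v t) x / t) *
            ((4 * π * t) ^ (-(n : ℝ) / 2) * Real.exp (-(v t x)))) ≤ 0 := by
  obtain ⟨m, rfl⟩ : ∃ m, n = m + 1 := ⟨n - 1, (Nat.succ_pred_eq_of_pos hn).symm⟩
  intro t ht
  have hsm : ContDiffOn ℝ (⊤ : ℕ∞) (FJ f) (U (m + 1)) := hsmooth
  have hg : ContDiff ℝ (⊤ : ℕ∞) (f t) := contDiff_slice hsm ht
  have hgpos : ∀ y, 0 < f t y := hpos t ht
  have hgper : IsPer (f t) := fun y k => hper t ht y k
  have hπt : 0 < 4 * π * t := by positivity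
  -- the statement's weight equals `f`
  have hweight : ∀ s > (0:ℝ), ∀ x,
      (4 * π * s) ^ (-((m+1 : ℕ) : ℝ) / 2) * Real.exp (-(v s x)) = f s x := by
    intro s hs x
    rw [hv s x]
    exact weight_eq (hpos s hs x) (by positivity) _
  -- `v s` as an explicit function
  have hvfun : ∀ s, v s = fun y =>
      -Real.log (f s y) - (((m+1 : ℕ) : ℝ) / 2) * Real.log (4 * π * s) :=
    fun s => funext fun y => hv s y
  constructor
  · -- the derivative statement
    -- Step 1: W agrees with ∫ PhiJ near t
    have hWs : ∀ s ∈ Set.Ioi (0:ℝ),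
        W s = ∫ x in Set.Icc (0 : Fin (m+1) → ℝ) 1, PhiJ f (s, x) := by
      intro s hs
      rw [hW s]
      refine setIntegral_congr_fun measurableSet_Icc fun x _ => ?_
      have hgs : ContDiff ℝ (⊤ : ℕ∞) (f s) := contDiff_slice hsm hs
      have hgsp : ∀ y, 0 < f s y := hpos s hs
      rw [hweight s hs x]
      have e1 : gradSq (v s) x = gradSq (f s) x / (f s x) ^ 2 := by
        rw [hvfun s]
        exact gradSq_v_eq hgs hgsp _ x
      rw [e1]
      show _ = s ^ 2 * (SJ f (s, x) / FJ f (s, x)) - 2 * ((m+1 : ℕ) : ℝ) * (s * FJ f (s, x))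
      rw [← gradSq_slice hsm hs x]
      show (s ^ 2 * (gradSq (f s) x / (f s x) ^ 2) - 2 * ((m+1 : ℕ) : ℝ) * s) * f s x
        = s ^ 2 * (gradSq (f s) x / f s x) - 2 * ((m+1 : ℕ) : ℝ) * (s * f s x)
      have hA : f s x ≠ 0 := (hgsp x).ne'
      field_simp
    -- Step 2: derivative of ∫ PhiJ
    have hD := hasDerivAt_intPhiJ hsm hpos hheat ht
    -- Step 3: identify the derivative value
    have hYcont : Continuous (fun x => t ^ 2 * (∑ i, pd i (pd i (Qf (f t))) x)
        + (4 - 2 * ((m+1 : ℕ) : ℝ)) * t * lap (f t) x) := by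
      have h1 : Continuous (fun x => ∑ i, pd i (pd i (Qf (f t))) x) :=
        continuous_finset_sum _ fun i _ =>
          (((contDiff_Qf hg hgpos).contDiff_pd i).contDiff_pd i).continuous
      exact (continuous_const.mul h1).add (continuous_const.mul (contDiff_lap hg).continuous)
    have hvt : ContDiff ℝ (⊤ : ℕ∞) (v t) := by
      rw [hvfun t]
      exact ((hg.log fun y => (hgpos y).ne').neg).sub contDiff_const
    have hI2cont : Continuous (fun x : Fin (m+1) → ℝ =>
        ((∑ i, ∑ j, (hess i j (v t) x - (1 / t) * (if i = j then (1:ℝ) else 0)) ^ 2)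
            + gradSq (v t) x / t) *
            ((4 * π * t) ^ (-((m+1 : ℕ) : ℝ) / 2) * Real.exp (-(v t x)))) := by
      have h1 : Continuous (fun x => ∑ i, ∑ j : Fin (m+1),
          (hess i j (v t) x - (1 / t) * (if i = j then (1:ℝ) else 0)) ^ 2) :=
        continuous_finset_sum _ fun i _ => continuous_finset_sum _ fun j _ =>
          ((((hvt.contDiff_pd j).contDiff_pd i).continuous).sub continuous_const).pow 2
      have h2 : Continuous (gradSq (v t)) := (contDiff_gradSq hvt).continuous
      have h3 : Continuous (fun x => Real.exp (-(v t x))) :=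
        Real.continuous_exp.comp (hvt.continuous).neg
      exact (h1.add (h2.div_const t)).mul (continuous_const.mul h3)
    have hDint : IntegrableOn (fun x => DPhiJ f (t, x))
        (Set.Icc (0 : Fin (m+1) → ℝ) 1) :=
      (continuous_slice_of_continuousOn (continuousOn_DPhiJ hsm hpos hheat) ht).integrableOn_Icc
    have hYint : IntegrableOn (fun x => t ^ 2 * (∑ i, pd i (pd i (Qf (f t))) x)
        + (4 - 2 * ((m+1 : ℕ) : ℝ)) * t * lap (f t) x)
        (Set.Icc (0 : Fin (m+1) → ℝ) 1) := hYcont.integrableOn_Icc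
    -- the grand pointwise identity
    have hpt : ∀ x : Fin (m+1) → ℝ, DPhiJ f (t, x)
        - (t ^ 2 * (∑ i, pd i (pd i (Qf (f t))) x)
            + (4 - 2 * ((m+1 : ℕ) : ℝ)) * t * lap (f t) x)
        = -2 * t ^ 2 *
          (((∑ i, ∑ j, (hess i j (v t) x - (1 / t) * (if i = j then (1:ℝ) else 0)) ^ 2)
            + gradSq (v t) x / t) *
            ((4 * π * t) ^ (-((m+1 : ℕ) : ℝ) / 2) * Real.exp (-(v t x)))) := by
      intro x
      rw [hweight t ht x]
      have eI2 : ((∑ i, ∑ j, (hess i j (v t) x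
            - (1 / t) * (if i = j then (1:ℝ) else 0)) ^ 2)
          + gradSq (v t) x / t) * f t x
          = (((gradSq (f t) x) ^ 2
              - 2 * (f t x) * (∑ i, ∑ j, pd i (pd j (f t)) x * pd i (f t) x * pd j (f t) x)
              + (f t x) ^ 2 * (∑ i, ∑ j, (pd i (pd j (f t)) x) ^ 2)) / (f t x) ^ 4
            - (2 / t) * ((gradSq (f t) x - lap (f t) x * f t x) / (f t x) ^ 2)
            + (m+1 : ℕ) * (1 / t) ^ 2 + (gradSq (f t) x / (f t x) ^ 2) / t) * f t x := by
        rw [hvfun t]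
        exact I2_eq hg hgpos _ t ht.ne' x
      rw [eI2, sum_pd_pd_Qf_eq hg hgpos x]
      have eD : DPhiJ f (t, x) = 2 * t * (gradSq (f t) x / f t x)
          + t ^ 2 * ((2 * (∑ j, pd j (f t) x * pd j (lap (f t)) x) * f t x
              - gradSq (f t) x * lap (f t) x) / (f t x) ^ 2)
          - 2 * ((m+1 : ℕ) : ℝ) * f t x - 2 * ((m+1 : ℕ) : ℝ) * t * lap (f t) x := by
        show 2 * t * (SJ f (t,x) / FJ f (t,x))
            + t ^ 2 * ((SJ' f (t,x) * FJ f (t,x) - SJ f (t,x) * lapJ f (t,x)) / (FJ f (t,x)) ^ 2)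
            - 2 * ((m+1 : ℕ) : ℝ) * FJ f (t,x) - 2 * ((m+1 : ℕ) : ℝ) * t * lapJ f (t,x) = _
        rw [← gradSq_slice hsm ht x, ← lap_slice hsm ht x]
        have eS' : SJ' f (t, x) = 2 * (∑ j, pd j (f t) x * pd j (lap (f t)) x) := by
          show (∑ j, 2 * uJ f j (t,x) * Dx j (lapJ f) (t,x)) = _
          rw [Finset.mul_sum]
          refine Finset.sum_congr rfl fun j _ => ?_
          rw [← pd_slice_uJ hsm j ht x, ← pd_lap_slice hsm j ht x]
          ring
        rw [eS']
        rfl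
      rw [eD]
      have hA : f t x ≠ 0 := (hgpos x).ne'
      have := grand_identity (f t x) (gradSq (f t) x) (lap (f t) x)
        (∑ i, ∑ j, (pd i (pd j (f t)) x) ^ 2)
        (∑ i, ∑ j, pd i (pd j (f t)) x * pd i (f t) x * pd j (f t) x)
        (∑ j, pd j (f t) x * pd j (lap (f t)) x) ((m+1 : ℕ) : ℝ) t hA ht.ne'
      rw [sub_eq_iff_eq_add]
      rw [this]
    -- assemble
    have hzero : ∫ x in Set.Icc (0 : Fin (m+1) → ℝ) 1,
        (t ^ 2 * (∑ i, pd i (pd i (Qf (f t))) x)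
          + (4 - 2 * ((m+1 : ℕ) : ℝ)) * t * lap (f t) x) = 0 :=
      integral_lap_comb_zero hg hgpos hgper (t ^ 2) ((4 - 2 * ((m+1 : ℕ) : ℝ)) * t)
    have hval : (∫ x in Set.Icc (0 : Fin (m+1) → ℝ) 1, DPhiJ f (t, x))
        = -2 * t ^ 2 * ∫ x in Set.Icc (0 : Fin (m+1) → ℝ) 1,
          (((∑ i, ∑ j, (hess i j (v t) x - (1 / t) * (if i = j then (1:ℝ) else 0)) ^ 2)
            + gradSq (v t) x / t) *
            ((4 * π * t) ^ (-((m+1 : ℕ) : ℝ) / 2) * Real.exp (-(v t x)))) := by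
      have e1 : (∫ x in Set.Icc (0 : Fin (m+1) → ℝ) 1, DPhiJ f (t, x))
          - ∫ x in Set.Icc (0 : Fin (m+1) → ℝ) 1,
            (t ^ 2 * (∑ i, pd i (pd i (Qf (f t))) x)
              + (4 - 2 * ((m+1 : ℕ) : ℝ)) * t * lap (f t) x)
          = ∫ x in Set.Icc (0 : Fin (m+1) → ℝ) 1,
            (-2 * t ^ 2) *
            (((∑ i, ∑ j, (hess i j (v t) x - (1 / t) * (if i = j then (1:ℝ) else 0)) ^ 2)
              + gradSq (v t) x / t) *
              ((4 * π * t) ^ (-((m+1 : ℕ) : ℝ) / 2) * Real.exp (-(v t x)))) := by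
        rw [← integral_sub hDint hYint]
        refine setIntegral_congr_fun measurableSet_Icc fun x _ => ?_
        have := hpt x
        rw [this]
      rw [hzero, sub_zero] at e1
      rw [e1, integral_const_mul]
    rw [← hval]
    exact hD.congr_of_eventuallyEq
      (Filter.eventuallyEq_of_mem (isOpen_Ioi.mem_nhds ht) hWs)
  · -- nonpositivity
    have hint : 0 ≤ ∫ x in Set.Icc (0 : Fin (m+1) → ℝ) 1,
        (((∑ i, ∑ j, (hess i j (v t) x - (1 / t) * (if i = j then (1:ℝ) else 0)) ^ 2)
          + gradSq (v t) x / t) *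
          ((4 * π * t) ^ (-((m+1 : ℕ) : ℝ) / 2) * Real.exp (-(v t x)))) := by
      refine setIntegral_nonneg measurableSet_Icc fun x _ => ?_
      have h1 : 0 ≤ ∑ i, ∑ j : Fin (m+1),
          (hess i j (v t) x - (1 / t) * (if i = j then (1:ℝ) else 0)) ^ 2 :=
        Finset.sum_nonneg fun i _ => Finset.sum_nonneg fun j _ => sq_nonneg _
      have h2 : 0 ≤ gradSq (v t) x / t :=
        div_nonneg (Finset.sum_nonneg fun j _ => sq_nonneg _) ht.le
      have h3 : 0 ≤ (4 * π * t) ^ (-((m+1 : ℕ) : ℝ) / 2) * Real.exp (-(v t x)) := by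
        positivity
      exact mul_nonneg (by linarith) h3
    have h4 : -2 * t ^ 2 ≤ 0 := by nlinarith
    exact mul_nonpos_of_nonpos_of_nonneg h4 hint
end
end

section
/- Let n ≥ 1 and let f : (−∞,0) × ℝⁿ → ℝ be a smooth positive solution of the backward heat equation ∂f/∂t = −Δf that is ℤⁿ-periodic in the space variable. Set τ = −t > 0 and u = −ln f. Then 2Δu − |∇u|² − 2n/τ ≤ 0 for all τ > 0 and all x ∈ ℝⁿ. -/
open MeasureTheory Real

noncomputable section

open scoped ContDiff
open Filter Set

variable {n : ℕ}

abbrev EE (n : ℕ) := ℝ × (Fin n → ℝ)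

lemma two_le_inf : (2 : WithTop ℕ∞) ≤ ∞ := by
  have : ((2:ℕ∞) : WithTop ℕ∞) ≤ ((⊤:ℕ∞) : WithTop ℕ∞) := by exact_mod_cast le_top
  simpa using this

/-- directional derivative -/
def Dv (w : EE n) (g : EE n → ℝ) (p : EE n) : ℝ := fderiv ℝ g p w

lemma diffAt_of_smooth {F : Type*} [NormedAddCommGroup F] [NormedSpace ℝ F]
    {U : Set (EE n)} (hU : IsOpen U) {g : EE n → F}
    (hg : ContDiffOn ℝ (⊤:ℕ∞) g U) {p : EE n} (hp : p ∈ U) : DifferentiableAt ℝ g p :=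
  ((hg.contDiffAt (hU.mem_nhds hp)).differentiableAt
    (by simpa using one_le_two.trans two_le_inf))

lemma Dv_smooth {U : Set (EE n)} (hU : IsOpen U) {g : EE n → ℝ}
    (hg : ContDiffOn ℝ (⊤:ℕ∞) g U) (w : EE n) :
    ContDiffOn ℝ (⊤:ℕ∞) (Dv w g) U := by
  have h1 : ContDiffOn ℝ (⊤:ℕ∞) (fderiv ℝ g) U :=
    hg.fderiv_of_isOpen hU (by simp)
  have h2 : ContDiff ℝ (⊤:ℕ∞) (fun L : EE n →L[ℝ] ℝ => L w) :=
    (ContinuousLinearMap.apply ℝ ℝ w).contDiff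
  exact h2.comp_contDiffOn h1

lemma Dv_congr {U : Set (EE n)} (hU : IsOpen U) {g₁ g₂ : EE n → ℝ}
    (h : Set.EqOn g₁ g₂ U) {p : EE n} (hp : p ∈ U)
    (w : EE n) : Dv w g₁ p = Dv w g₂ p := by
  unfold Dv
  rw [Filter.EventuallyEq.fderiv_eq (Filter.eventuallyEq_of_mem (hU.mem_nhds hp) h)]

lemma Dv_hasFDerivAt {g : EE n → ℝ} {L : EE n →L[ℝ] ℝ} {p : EE n}
    (h : HasFDerivAt g L p) (w : EE n) : Dv w g p = L w := by rw [Dv, h.fderiv]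

lemma Dv_comm {U : Set (EE n)} (hU : IsOpen U) {g : EE n → ℝ}
    (hg : ContDiffOn ℝ (⊤:ℕ∞) g U) {p : EE n} (hp : p ∈ U)
    (w w' : EE n) : Dv w (Dv w' g) p = Dv w' (Dv w g) p := by
  have hsym : IsSymmSndFDerivAt ℝ g p :=
    (hg.contDiffAt (hU.mem_nhds hp)).isSymmSndFDerivAt (by simpa using two_le_inf)
  have hd2 : DifferentiableAt ℝ (fderiv ℝ g) p :=
    diffAt_of_smooth (g := fderiv ℝ g) hU (hg.fderiv_of_isOpen hU (by simp : ∞ + 1 ≤ (⊤:ℕ∞))) hp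
  have key : ∀ v v' : EE n, Dv v (Dv v' g) p = fderiv ℝ (fderiv ℝ g) p v v' := by
    intro v v'
    have h0 : Dv v' g = fun q => (fderiv ℝ g q) v' := rfl
    rw [h0, Dv, fderiv_clm_apply hd2 (differentiableAt_const _)]
    simp
  rw [key, key, hsym w w']

open Filter Set


lemma endpoint_deriv_nonpos {h : ℝ → ℝ} {a b : ℝ} (hab : a < b)
    (hd : DifferentiableAt ℝ h a) (hmax : ∀ s ∈ Set.Icc a b, h s ≤ h a) :
    deriv h a ≤ 0 := by
  have hs : Tendsto (slope h a) (nhdsWithin a {a}ᶜ) (nhds (deriv h a)) :=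
    hasDerivAt_iff_tendsto_slope.1 hd.hasDerivAt
  have hs' : Tendsto (slope h a) (nhdsWithin a (Set.Ioi a)) (nhds (deriv h a)) :=
    hs.mono_left (nhdsWithin_mono a (fun x hx => ne_of_gt hx))
  refine le_of_tendsto hs' ?_
  filter_upwards [Ioo_mem_nhdsGT_of_mem (Set.mem_Ico.2 ⟨le_refl a, hab⟩)] with x hx
  rw [slope_def_field]
  apply div_nonpos_of_nonpos_of_nonneg
  · have := hmax x ⟨le_of_lt hx.1, le_of_lt hx.2⟩; linarith
  · linarith [hx.1]

lemma second_deriv_nonpos_of_isLocalMax {h : ℝ → ℝ} {a : ℝ}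
    (hd : ∀ᶠ x in nhds a, DifferentiableAt ℝ h x)
    (h2 : DifferentiableAt ℝ (deriv h) a) (hmax : IsLocalMax h a) :
    deriv (deriv h) a ≤ 0 := by
  by_contra hc
  push_neg at hc
  have hz : deriv h a = 0 := hmax.deriv_eq_zero
  have hs : Tendsto (slope (deriv h) a) (nhdsWithin a (Set.Ioi a))
      (nhds (deriv (deriv h) a)) :=
    (hasDerivAt_iff_tendsto_slope.1 h2.hasDerivAt).mono_left
      (nhdsWithin_mono a (fun x hx => ne_of_gt hx))
  have E1 : ∀ᶠ x in nhdsWithin a (Set.Ioi a), 0 < deriv h x := by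
    have hev : ∀ᶠ x in nhdsWithin a (Set.Ioi a), 0 < slope (deriv h) a x :=
      hs.eventually (eventually_gt_nhds hc)
    filter_upwards [hev, self_mem_nhdsWithin] with x hx hx'
    rw [slope_def_field, hz, sub_zero] at hx
    have hxa : 0 < x - a := by simp only [Set.mem_Ioi] at hx'; linarith
    have := mul_pos hx hxa
    rw [div_mul_cancel₀] at this
    · exact this
    · exact ne_of_gt hxa
  obtain ⟨u, hu, hIoc⟩ := mem_nhdsGT_iff_exists_Ioc_subset.1 E1
  obtain ⟨ε, hε, hball⟩ := Metric.eventually_nhds_iff.1 (hd.and hmax)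
  set c := min u (a + ε / 2) with hc'
  have hac : a < c := lt_min hu (by linarith)
  have hsub : ∀ x ∈ Set.Icc a c, DifferentiableAt ℝ h x ∧ h x ≤ h a := by
    intro x hx
    apply hball
    rw [Real.dist_eq, abs_lt]
    constructor
    · linarith [hx.1]
    · have : x ≤ a + ε / 2 := le_trans hx.2 (min_le_right _ _)
      linarith
  obtain ⟨ξ, hξ, hslope⟩ := exists_hasDerivAt_eq_slope h (deriv h) hac
    (fun x hx => ((hsub x hx).1).continuousAt.continuousWithinAt)
    (fun x hx => ((hsub x ⟨le_of_lt hx.1, le_of_lt hx.2⟩).1).hasDerivAt)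
  have hpos : 0 < deriv h ξ := hIoc ⟨hξ.1, le_trans (le_of_lt hξ.2) (min_le_left _ _)⟩
  rw [hslope] at hpos
  have hca : h c ≤ h a := (hsub c ⟨le_of_lt hac, le_refl c⟩).2
  have : (h c - h a) / (c - a) ≤ 0 :=
    div_nonpos_of_nonpos_of_nonneg (by linarith) (by linarith)
  linarith


variable {n : ℕ}
section arith
variable {g h : EE n → ℝ} {p w : EE n}

lemma Dv_add (hg : DifferentiableAt ℝ g p) (hh : DifferentiableAt ℝ h p) :
    Dv w (fun q => g q + h q) p = Dv w g p + Dv w h p := by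
  rw [Dv_hasFDerivAt (hg.hasFDerivAt.fun_add hh.hasFDerivAt) w]; simp [Dv]

lemma Dv_neg : Dv w (fun q => -g q) p = -Dv w g p := by
  rw [Dv, fderiv_fun_neg]; simp [Dv]

lemma Dv_sub (hg : DifferentiableAt ℝ g p) (hh : DifferentiableAt ℝ h p) :
    Dv w (fun q => g q - h q) p = Dv w g p - Dv w h p := by
  rw [Dv_hasFDerivAt (hg.hasFDerivAt.fun_sub hh.hasFDerivAt) w]; simp [Dv]

lemma Dv_mul (hg : DifferentiableAt ℝ g p) (hh : DifferentiableAt ℝ h p) :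
    Dv w (fun q => g q * h q) p = g p * Dv w h p + Dv w g p * h p := by
  rw [Dv_hasFDerivAt (hg.hasFDerivAt.fun_mul hh.hasFDerivAt) w]; simp [Dv]; ring

lemma Dv_const_mul (c : ℝ) (hg : DifferentiableAt ℝ g p) :
    Dv w (fun q => c * g q) p = c * Dv w g p := by
  rw [Dv_hasFDerivAt (hg.hasFDerivAt.const_mul c) w]; simp [Dv]

lemma Dv_sq (hg : DifferentiableAt ℝ g p) :
    Dv w (fun q => (g q)^2) p = 2 * g p * Dv w g p := by
  have : (fun q => (g q)^2) = fun q => g q * g q := by funext q; ring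
  rw [this, Dv_mul hg hg]; ring

lemma Dv_sum {ι : Type*} (s : Finset ι) (G : ι → EE n → ℝ)
    (hG : ∀ i ∈ s, DifferentiableAt ℝ (G i) p) :
    Dv w (fun q => ∑ i ∈ s, G i q) p = ∑ i ∈ s, Dv w (G i) p := by
  rw [Dv_hasFDerivAt (HasFDerivAt.fun_sum (fun i hi => (hG i hi).hasFDerivAt)) w]
  simp [Dv]

lemma Dv_inv (hg : DifferentiableAt ℝ g p) (hne : g p ≠ 0) :
    Dv w (fun q => (g q)⁻¹) p = -((g p)^2)⁻¹ * Dv w g p := by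
  have h1 : HasFDerivAt (fun q => (g q)⁻¹) ((-((g p)^2)⁻¹) • fderiv ℝ g p) p :=
    (hasDerivAt_inv hne).comp_hasFDerivAt p hg.hasFDerivAt
  rw [Dv_hasFDerivAt h1 w]; simp [Dv]

lemma Dv_neg_log (hg : DifferentiableAt ℝ g p) (hpos : 0 < g p) :
    Dv w (fun q => -Real.log (g q)) p = -(g p)⁻¹ * Dv w g p := by
  have h1 : HasFDerivAt (fun q => Real.log (g q)) ((g p)⁻¹ • fderiv ℝ g p) p :=
    (Real.hasDerivAt_log (ne_of_gt hpos)).comp_hasFDerivAt p hg.hasFDerivAt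
  have h2 : HasFDerivAt (fun q => -Real.log (g q)) (-((g p)⁻¹ • fderiv ℝ g p)) p := h1.neg
  rw [Dv_hasFDerivAt h2 w]; simp [Dv]
end arith

section slice
variable {g : EE n → ℝ} {t : ℝ} {x : Fin n → ℝ}

lemma hasFDerivAt_mk_right (t : ℝ) (x : Fin n → ℝ) :
    HasFDerivAt (fun y : Fin n → ℝ => ((t, y) : EE n))
      (ContinuousLinearMap.inr ℝ ℝ (Fin n → ℝ)) x :=
  hasFDerivAt_prodMk_right t x

lemma pd_slice (hg : DifferentiableAt ℝ g (t, x)) (i : Fin n) :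
    pd i (fun y => g (t, y)) x = Dv ((0 : ℝ), Pi.single i 1) g (t, x) := by
  have h : HasFDerivAt (fun y => g (t, y))
      ((fderiv ℝ g (t, x)).comp (ContinuousLinearMap.inr ℝ ℝ (Fin n → ℝ))) x :=
    hg.hasFDerivAt.comp x (hasFDerivAt_mk_right t x)
  rw [pd, h.fderiv]; simp [Dv]

lemma deriv_slice (hg : DifferentiableAt ℝ g (t, x)) :
    deriv (fun s => g (s, x)) t = Dv ((1 : ℝ), (0 : Fin n → ℝ)) g (t, x) := by
  have ha : HasDerivAt (fun s : ℝ => ((s, x) : EE n)) (1, 0) t := by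
    have := ((hasDerivAt_id t).prodMk (hasDerivAt_const t x))
    simpa using this
  have h : HasDerivAt (fun s => g (s, x)) ((fderiv ℝ g (t, x)) (1, 0)) t :=
    hg.hasFDerivAt.comp_hasDerivAt t ha
  rw [h.deriv]; rfl

lemma hasDerivAt_line (w : EE n) {r : ℝ} {p : EE n}
    (hg : DifferentiableAt ℝ g (p + r • w)) :
    HasDerivAt (fun s : ℝ => g (p + s • w)) (Dv w g (p + r • w)) r := by
  have ha : HasDerivAt (fun s : ℝ => p + s • w) w r := by
    simpa using ((hasDerivAt_id r).smul_const w).const_add p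
  exact hg.hasFDerivAt.comp_hasDerivAt r ha
end slice

section helpers
variable {p w : EE n} {G H K : Fin n → EE n → ℝ}

lemma diff_sum (hG : ∀ j, DifferentiableAt ℝ (G j) p) :
    DifferentiableAt ℝ (fun q => ∑ j, G j q) p :=
  DifferentiableAt.fun_sum (fun j _ => hG j)

lemma diff_sq_sum (hH : ∀ j, DifferentiableAt ℝ (H j) p) :
    DifferentiableAt ℝ (fun q => ∑ j, (H j q)^2) p :=
  DifferentiableAt.fun_sum (fun j _ => (hH j).pow 2)

lemma Dv_expand1 (hG : ∀ j, DifferentiableAt ℝ (G j) p)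
    (hH : ∀ j, DifferentiableAt ℝ (H j) p) :
    Dv w (fun q => -(∑ j, G j q) + ∑ j, (H j q)^2) p
      = -(∑ j, Dv w (G j) p) + ∑ j, 2 * H j p * Dv w (H j) p := by
  rw [Dv_add ((diff_sum hG).fun_neg) (diff_sq_sum hH)]
  have h1 : Dv w (fun q => -(∑ j, G j q)) p = -(∑ j, Dv w (G j) p) := by
    rw [show (fun q => -(∑ j, G j q)) = (fun q => -((fun q' => ∑ j, G j q') q)) from rfl,
      Dv_neg, Dv_sum Finset.univ G (fun j _ => hG j)]
  have h2 : Dv w (fun q => ∑ j, (H j q)^2) p = ∑ j, 2 * H j p * Dv w (H j) p := by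
    rw [Dv_sum Finset.univ (fun j q => (H j q)^2) (fun j _ => (hH j).pow 2)]
    exact Finset.sum_congr rfl (fun j _ => Dv_sq (hH j))
  rw [h1, h2]

lemma Dv_expand2 (hG : ∀ j, DifferentiableAt ℝ (G j) p)
    (hH : ∀ j, DifferentiableAt ℝ (H j) p) :
    Dv w (fun q => 2 * (∑ j, G j q) - ∑ j, (H j q)^2) p
      = 2 * (∑ j, Dv w (G j) p) - ∑ j, 2 * H j p * Dv w (H j) p := by
  rw [Dv_sub ((diff_sum hG).const_mul 2) (diff_sq_sum hH)]
  have h1 : Dv w (fun q => 2 * (∑ j, G j q)) p = 2 * ∑ j, Dv w (G j) p := by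
    rw [Dv_const_mul 2 (diff_sum hG), Dv_sum Finset.univ G (fun j _ => hG j)]
  have h2 : Dv w (fun q => ∑ j, (H j q)^2) p = ∑ j, 2 * H j p * Dv w (H j) p := by
    rw [Dv_sum Finset.univ (fun j q => (H j q)^2) (fun j _ => (hH j).pow 2)]
    exact Finset.sum_congr rfl (fun j _ => Dv_sq (hH j))
  rw [h1, h2]

lemma Dv_expand3 (hG : ∀ j, DifferentiableAt ℝ (G j) p)
    (hH : ∀ j, DifferentiableAt ℝ (H j) p) (hK : ∀ j, DifferentiableAt ℝ (K j) p) :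
    Dv w (fun q => -(∑ j, G j q) + ∑ j, 2 * H j q * K j q) p
      = -(∑ j, Dv w (G j) p)
        + ∑ j, (2 * Dv w (H j) p * K j p + 2 * H j p * Dv w (K j) p) := by
  have hprod : ∀ j, DifferentiableAt ℝ (fun q => 2 * H j q * K j q) p :=
    fun j => (((hH j).const_mul 2).mul (hK j))
  rw [Dv_add ((diff_sum hG).fun_neg) (DifferentiableAt.fun_sum (fun j _ => hprod j))]
  have h1 : Dv w (fun q => -(∑ j, G j q)) p = -(∑ j, Dv w (G j) p) := by
    rw [show (fun q => -(∑ j, G j q)) = (fun q => -((fun q' => ∑ j, G j q') q)) from rfl,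
      Dv_neg, Dv_sum Finset.univ G (fun j _ => hG j)]
  have h2 : Dv w (fun q => ∑ j, 2 * H j q * K j q) p
      = ∑ j, (2 * Dv w (H j) p * K j p + 2 * H j p * Dv w (K j) p) := by
    rw [Dv_sum Finset.univ (fun j q => 2 * H j q * K j q) (fun j _ => hprod j)]
    refine Finset.sum_congr rfl (fun j _ => ?_)
    rw [show (fun q => 2 * H j q * K j q) = (fun q => ((fun q' => 2 * H j q') q) * K j q) from rfl,
      Dv_mul ((hH j).const_mul 2) (hK j), Dv_const_mul 2 (hH j)]
    ring
  rw [h1, h2]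

lemma Dv_expand4 (hG : ∀ j, DifferentiableAt ℝ (G j) p)
    (hH : ∀ j, DifferentiableAt ℝ (H j) p) (hK : ∀ j, DifferentiableAt ℝ (K j) p) :
    Dv w (fun q => 2 * (∑ j, G j q) - ∑ j, 2 * H j q * K j q) p
      = 2 * (∑ j, Dv w (G j) p)
        - ∑ j, (2 * Dv w (H j) p * K j p + 2 * H j p * Dv w (K j) p) := by
  have hprod : ∀ j, DifferentiableAt ℝ (fun q => 2 * H j q * K j q) p :=
    fun j => (((hH j).const_mul 2).mul (hK j))
  rw [Dv_sub ((diff_sum hG).const_mul 2) (DifferentiableAt.fun_sum (fun j _ => hprod j))]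
  have h1 : Dv w (fun q => 2 * (∑ j, G j q)) p = 2 * ∑ j, Dv w (G j) p := by
    rw [Dv_const_mul 2 (diff_sum hG), Dv_sum Finset.univ G (fun j _ => hG j)]
  have h2 : Dv w (fun q => ∑ j, 2 * H j q * K j q) p
      = ∑ j, (2 * Dv w (H j) p * K j p + 2 * H j p * Dv w (K j) p) := by
    rw [Dv_sum Finset.univ (fun j q => 2 * H j q * K j q) (fun j _ => hprod j)]
    refine Finset.sum_congr rfl (fun j _ => ?_)
    rw [show (fun q => 2 * H j q * K j q) = (fun q => ((fun q' => 2 * H j q') q) * K j q) from rfl,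
      Dv_mul ((hH j).const_mul 2) (hK j), Dv_const_mul 2 (hH j)]
    ring
  rw [h1, h2]
end helpers




lemma pull_const {n : ℕ} (c : ℝ) (f : Fin n → Fin n → ℝ) :
    ∑ i, ∑ j, c * f i j = c * ∑ i, ∑ j, f i j := by
  rw [Finset.mul_sum]
  exact Finset.sum_congr rfl fun i _ => by rw [Finset.mul_sum]

lemma sum_algebra {n : ℕ} (a : Fin n → ℝ) (b c1 c2 d : Fin n → Fin n → ℝ)
    (hc : ∀ i j, c1 i j = c2 j i) :
    2 * (∑ i, (-(∑ j, d i j) + ∑ j, (2 * b i j * b i j + 2 * a j * c1 i j)))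
      - ∑ i, 2 * a i * (-(∑ j, c2 i j) + ∑ j, 2 * a j * b i j)
    = -(∑ i, (2 * (∑ j, d i j) - ∑ j, (2 * b i j * b i j + 2 * a j * c1 i j)))
      + 2 * ∑ i, a i * (2 * (∑ j, c2 i j) - ∑ j, 2 * a j * b i j)
      + 2 * ∑ i, ∑ j, (b i j)^2 := by
  have hswap : ∑ i, ∑ j, a j * c1 i j = ∑ i, ∑ j, a i * c2 i j := by
    simp only [hc]
    exact Finset.sum_comm
  have hP6 : ∑ i, ∑ j, (b i j)^2 = ∑ i, ∑ j, b i j * b i j :=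
    Finset.sum_congr rfl fun i _ => Finset.sum_congr rfl fun j _ => by ring
  have eX : ∑ i, (-(∑ j, d i j) + ∑ j, (2 * b i j * b i j + 2 * a j * c1 i j))
      = -(∑ i, ∑ j, d i j) + (2 * ∑ i, ∑ j, b i j * b i j + 2 * ∑ i, ∑ j, a j * c1 i j) := by
    rw [Finset.sum_add_distrib, Finset.sum_neg_distrib]
    congr 1
    rw [← pull_const 2 (fun i j => b i j * b i j), ← pull_const 2 (fun i j => a j * c1 i j),
      ← Finset.sum_add_distrib]
    exact Finset.sum_congr rfl fun i _ => by
      rw [← Finset.sum_add_distrib]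
      exact Finset.sum_congr rfl fun j _ => by ring
  have eY : ∑ i, 2 * a i * (-(∑ j, c2 i j) + ∑ j, 2 * a j * b i j)
      = -(2 * ∑ i, ∑ j, a i * c2 i j) + 4 * ∑ i, ∑ j, a i * (a j * b i j) := by
    have step : ∀ i, 2 * a i * (-(∑ j, c2 i j) + ∑ j, 2 * a j * b i j)
        = -(∑ j, 2 * (a i * c2 i j)) + ∑ j, 4 * (a i * (a j * b i j)) := by
      intro i
      rw [mul_add, mul_neg, Finset.mul_sum, Finset.mul_sum]
      congr 1
      · congr 1; exact Finset.sum_congr rfl fun j _ => by ring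
      · exact Finset.sum_congr rfl fun j _ => by ring
    simp only [step]
    rw [Finset.sum_add_distrib, Finset.sum_neg_distrib,
      pull_const 2 (fun i j => a i * c2 i j), pull_const 4 (fun i j => a i * (a j * b i j))]
  have eZ : ∑ i, (2 * (∑ j, d i j) - ∑ j, (2 * b i j * b i j + 2 * a j * c1 i j))
      = 2 * (∑ i, ∑ j, d i j)
        - (2 * ∑ i, ∑ j, b i j * b i j + 2 * ∑ i, ∑ j, a j * c1 i j) := by
    rw [Finset.sum_sub_distrib]
    congr 1
    · rw [Finset.mul_sum]
    · rw [← pull_const 2 (fun i j => b i j * b i j), ← pull_const 2 (fun i j => a j * c1 i j),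
        ← Finset.sum_add_distrib]
      exact Finset.sum_congr rfl fun i _ => by
        rw [← Finset.sum_add_distrib]
        exact Finset.sum_congr rfl fun j _ => by ring
  have eW : ∑ i, a i * (2 * (∑ j, c2 i j) - ∑ j, 2 * a j * b i j)
      = 2 * (∑ i, ∑ j, a i * c2 i j) - 2 * ∑ i, ∑ j, a i * (a j * b i j) := by
    have step : ∀ i, a i * (2 * (∑ j, c2 i j) - ∑ j, 2 * a j * b i j)
        = ∑ j, 2 * (a i * c2 i j) - ∑ j, 2 * (a i * (a j * b i j)) := by
      intro i
      rw [mul_sub, Finset.mul_sum, Finset.mul_sum, Finset.mul_sum]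
      congr 1
      · exact Finset.sum_congr rfl fun j _ => by ring
      · exact Finset.sum_congr rfl fun j _ => by ring
    simp only [step]
    rw [Finset.sum_sub_distrib, pull_const 2 (fun i j => a i * c2 i j),
      pull_const 2 (fun i j => a i * (a j * b i j))]
  rw [eX, eY, eZ, eW, hP6, hswap]
  ring


def ev (n : ℕ) (i : Fin n) : EE n := ((0:ℝ), Pi.single i 1)
def et (n : ℕ) : EE n := ((1:ℝ), (0 : Fin n → ℝ))

def Fq {n : ℕ} (v : EE n → ℝ) : EE n → ℝ :=
  fun p => 2 * (∑ i, Dv (ev n i) (Dv (ev n i) v) p) - ∑ i, (Dv (ev n i) v p)^2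

section keyid
variable {n : ℕ} {U : Set (EE n)} {v : EE n → ℝ}

theorem key_identity (hU : IsOpen U) (hv : ContDiffOn ℝ (⊤:ℕ∞) v U)
    (hPDE : ∀ p ∈ U, Dv (et n) v p
      = -(∑ j, Dv (ev n j) (Dv (ev n j) v) p) + ∑ j, (Dv (ev n j) v p)^2)
    {p : EE n} (hp : p ∈ U) :
    Dv (et n) (Fq v) p
      = -(∑ i, Dv (ev n i) (Dv (ev n i) (Fq v)) p)
        + 2 * ∑ i, Dv (ev n i) v p * Dv (ev n i) (Fq v) p
        + 2 * ∑ i, ∑ j, (Dv (ev n i) (Dv (ev n j) v) p)^2 := by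
  have s1 : ∀ j, ContDiffOn ℝ (⊤:ℕ∞) (Dv (ev n j) v) U := fun j => Dv_smooth hU hv _
  have s2 : ∀ i j, ContDiffOn ℝ (⊤:ℕ∞) (Dv (ev n i) (Dv (ev n j) v)) U :=
    fun i j => Dv_smooth hU (s1 j) _
  have s3 : ∀ k i j, ContDiffOn ℝ (⊤:ℕ∞) (Dv (ev n k) (Dv (ev n i) (Dv (ev n j) v))) U :=
    fun k i j => Dv_smooth hU (s2 i j) _
  have d1 : ∀ {q : EE n}, q ∈ U → ∀ j, DifferentiableAt ℝ (Dv (ev n j) v) q :=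
    fun hq j => diffAt_of_smooth hU (s1 j) hq
  have d2 : ∀ {q : EE n}, q ∈ U → ∀ i j,
      DifferentiableAt ℝ (Dv (ev n i) (Dv (ev n j) v)) q :=
    fun hq i j => diffAt_of_smooth hU (s2 i j) hq
  have d3 : ∀ {q : EE n}, q ∈ U → ∀ k i j,
      DifferentiableAt ℝ (Dv (ev n k) (Dv (ev n i) (Dv (ev n j) v))) q :=
    fun hq k i j => diffAt_of_smooth hU (s3 k i j) hq
  have hWeq : Set.EqOn (Dv (et n) v)
      (fun q => -(∑ j, Dv (ev n j) (Dv (ev n j) v) q) + ∑ j, (Dv (ev n j) v q)^2) U :=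
    fun q hq => hPDE q hq
  have hW1eq : ∀ i, Set.EqOn (Dv (ev n i)
      (fun q => -(∑ j, Dv (ev n j) (Dv (ev n j) v) q) + ∑ j, (Dv (ev n j) v q)^2))
      (fun q => -(∑ j, Dv (ev n i) (Dv (ev n j) (Dv (ev n j) v)) q)
        + ∑ j, 2 * Dv (ev n j) v q * Dv (ev n i) (Dv (ev n j) v) q) U := by
    intro i q hq
    exact Dv_expand1 (G := fun j => Dv (ev n j) (Dv (ev n j) v))
      (H := fun j => Dv (ev n j) v) (fun j => d2 hq j j) (fun j => d1 hq j)
  have hAet : ∀ i, Set.EqOn (Dv (et n) (Dv (ev n i) v))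
      (fun q => -(∑ j, Dv (ev n i) (Dv (ev n j) (Dv (ev n j) v)) q)
        + ∑ j, 2 * Dv (ev n j) v q * Dv (ev n i) (Dv (ev n j) v) q) U := by
    intro i q hq
    calc Dv (et n) (Dv (ev n i) v) q = Dv (ev n i) (Dv (et n) v) q :=
          Dv_comm hU hv hq _ _
      _ = Dv (ev n i) (fun q' => -(∑ j, Dv (ev n j) (Dv (ev n j) v) q')
            + ∑ j, (Dv (ev n j) v q')^2) q := Dv_congr hU hWeq hq _
      _ = _ := hW1eq i hq
  have hAetP : ∀ i, p ∈ U → Dv (et n) (Dv (ev n i) v) p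
      = -(∑ j, Dv (ev n i) (Dv (ev n j) (Dv (ev n j) v)) p)
        + ∑ j, 2 * Dv (ev n j) v p * Dv (ev n i) (Dv (ev n j) v) p :=
    fun i hq => hAet i hq
  have hF1eq : ∀ i, Set.EqOn (Dv (ev n i) (Fq v))
      (fun q => 2 * (∑ j, Dv (ev n i) (Dv (ev n j) (Dv (ev n j) v)) q)
        - ∑ j, 2 * Dv (ev n j) v q * Dv (ev n i) (Dv (ev n j) v) q) U := by
    intro i q hq
    exact Dv_expand2 (G := fun j => Dv (ev n j) (Dv (ev n j) v))
      (H := fun j => Dv (ev n j) v) (fun j => d2 hq j j) (fun j => d1 hq j)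
  have hF1eqP : ∀ i, Dv (ev n i) (Fq v) p
      = 2 * (∑ j, Dv (ev n i) (Dv (ev n j) (Dv (ev n j) v)) p)
        - ∑ j, 2 * Dv (ev n j) v p * Dv (ev n i) (Dv (ev n j) v) p :=
    fun i => hF1eq i hp
  have comm3 : ∀ i j, Dv (ev n i) (Dv (ev n i) (Dv (ev n j) v)) p
      = Dv (ev n j) (Dv (ev n i) (Dv (ev n i) v)) p := by
    intro i j
    have h1 : Set.EqOn (Dv (ev n i) (Dv (ev n j) v)) (Dv (ev n j) (Dv (ev n i) v)) U :=
      fun q hq => Dv_comm hU hv hq _ _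
    calc Dv (ev n i) (Dv (ev n i) (Dv (ev n j) v)) p
        = Dv (ev n i) (Dv (ev n j) (Dv (ev n i) v)) p := Dv_congr hU h1 hp _
      _ = Dv (ev n j) (Dv (ev n i) (Dv (ev n i) v)) p := Dv_comm hU (s1 i) hp _ _
  have R1 : ∀ i, Dv (ev n i) (Dv (ev n i) (Fq v)) p
      = 2 * (∑ j, Dv (ev n i) (Dv (ev n i) (Dv (ev n j) (Dv (ev n j) v))) p)
        - ∑ j, (2 * Dv (ev n i) (Dv (ev n j) v) p * Dv (ev n i) (Dv (ev n j) v) p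
            + 2 * Dv (ev n j) v p * Dv (ev n i) (Dv (ev n i) (Dv (ev n j) v)) p) := by
    intro i
    rw [Dv_congr hU (hF1eq i) hp]
    exact Dv_expand4 (G := fun j => Dv (ev n i) (Dv (ev n j) (Dv (ev n j) v)))
      (H := fun j => Dv (ev n j) v) (K := fun j => Dv (ev n i) (Dv (ev n j) v))
      (fun j => d3 hp i j j) (fun j => d1 hp j) (fun j => d2 hp i j)
  have T2 : ∀ i, Dv (et n) (Dv (ev n i) (Dv (ev n i) v)) p
      = -(∑ j, Dv (ev n i) (Dv (ev n i) (Dv (ev n j) (Dv (ev n j) v))) p)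
        + ∑ j, (2 * Dv (ev n i) (Dv (ev n j) v) p * Dv (ev n i) (Dv (ev n j) v) p
            + 2 * Dv (ev n j) v p * Dv (ev n i) (Dv (ev n i) (Dv (ev n j) v)) p) := by
    intro i
    calc Dv (et n) (Dv (ev n i) (Dv (ev n i) v)) p
        = Dv (ev n i) (Dv (et n) (Dv (ev n i) v)) p := Dv_comm hU (s1 i) hp _ _
      _ = Dv (ev n i) (fun q => -(∑ j, Dv (ev n i) (Dv (ev n j) (Dv (ev n j) v)) q)
            + ∑ j, 2 * Dv (ev n j) v q * Dv (ev n i) (Dv (ev n j) v) q) p :=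
          Dv_congr hU (hAet i) hp _
      _ = _ := by
          exact Dv_expand3 (G := fun j => Dv (ev n i) (Dv (ev n j) (Dv (ev n j) v)))
            (H := fun j => Dv (ev n j) v) (K := fun j => Dv (ev n i) (Dv (ev n j) v))
            (fun j => d3 hp i j j) (fun j => d1 hp j) (fun j => d2 hp i j)
  have T1 : Dv (et n) (Fq v) p
      = 2 * (∑ i, Dv (et n) (Dv (ev n i) (Dv (ev n i) v)) p)
        - ∑ i, 2 * Dv (ev n i) v p * Dv (et n) (Dv (ev n i) v) p := by
    exact Dv_expand2 (G := fun i => Dv (ev n i) (Dv (ev n i) v))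
      (H := fun i => Dv (ev n i) v)
      (fun i => d2 hp i i) (fun i => d1 hp i)
  have TL : ∑ i, Dv (et n) (Dv (ev n i) (Dv (ev n i) v)) p
      = ∑ i, (-(∑ j, Dv (ev n i) (Dv (ev n i) (Dv (ev n j) (Dv (ev n j) v))) p)
        + ∑ j, (2 * Dv (ev n i) (Dv (ev n j) v) p * Dv (ev n i) (Dv (ev n j) v) p
            + 2 * Dv (ev n j) v p * Dv (ev n i) (Dv (ev n i) (Dv (ev n j) v)) p)) :=
    Finset.sum_congr rfl fun i _ => T2 i
  have TR : ∑ i, 2 * Dv (ev n i) v p * Dv (et n) (Dv (ev n i) v) p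
      = ∑ i, 2 * Dv (ev n i) v p *
        (-(∑ j, Dv (ev n i) (Dv (ev n j) (Dv (ev n j) v)) p)
          + ∑ j, 2 * Dv (ev n j) v p * Dv (ev n i) (Dv (ev n j) v) p) :=
    Finset.sum_congr rfl fun i _ => by rw [hAetP i hp]
  have RS1 : ∑ i, Dv (ev n i) (Dv (ev n i) (Fq v)) p
      = ∑ i, (2 * (∑ j, Dv (ev n i) (Dv (ev n i) (Dv (ev n j) (Dv (ev n j) v))) p)
        - ∑ j, (2 * Dv (ev n i) (Dv (ev n j) v) p * Dv (ev n i) (Dv (ev n j) v) p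
            + 2 * Dv (ev n j) v p * Dv (ev n i) (Dv (ev n i) (Dv (ev n j) v)) p)) :=
    Finset.sum_congr rfl fun i _ => R1 i
  have RS2 : ∑ i, Dv (ev n i) v p * Dv (ev n i) (Fq v) p
      = ∑ i, Dv (ev n i) v p *
        (2 * (∑ j, Dv (ev n i) (Dv (ev n j) (Dv (ev n j) v)) p)
          - ∑ j, 2 * Dv (ev n j) v p * Dv (ev n i) (Dv (ev n j) v) p) :=
    Finset.sum_congr rfl fun i _ => by rw [hF1eqP i]
  rw [T1, TL, TR, RS1, RS2]
  exact sum_algebra (fun i => Dv (ev n i) v p)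
    (fun i j => Dv (ev n i) (Dv (ev n j) v) p)
    (fun i j => Dv (ev n i) (Dv (ev n i) (Dv (ev n j) v)) p)
    (fun i j => Dv (ev n i) (Dv (ev n j) (Dv (ev n j) v)) p)
    (fun i j => Dv (ev n i) (Dv (ev n i) (Dv (ev n j) (Dv (ev n j) v))) p)
    comm3
end keyid

section periodic
variable {n : ℕ} {U : Set (EE n)} {g : EE n → ℝ}

lemma Dv_periodic (hU : IsOpen U) (hg : ContDiffOn ℝ (⊤:ℕ∞) g U) {c : EE n}
    (hper : ∀ p ∈ U, g (p + c) = g p) {p : EE n} (hp : p ∈ U) (hpc : p + c ∈ U)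
    (w : EE n) : Dv w g (p + c) = Dv w g p := by
  have h2 : HasFDerivAt g (fderiv ℝ g (p + c)) (p + c) :=
    (diffAt_of_smooth hU hg hpc).hasFDerivAt
  have h3 : HasFDerivAt (fun q => g (q + c)) (fderiv ℝ g (p + c)) p := by
    have := h2.comp p ((hasFDerivAt_id p).add_const c)
    exact this
  have h4 : Set.EqOn (fun q => g (q + c)) g U := fun q hq => hper q hq
  have h5 : fderiv ℝ (fun q => g (q + c)) p = fderiv ℝ g p :=
    Filter.EventuallyEq.fderiv_eq (Filter.eventuallyEq_of_mem (hU.mem_nhds hp) h4)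
  calc Dv w g (p + c) = fderiv ℝ g (p + c) w := rfl
    _ = fderiv ℝ (fun q => g (q + c)) p w := by rw [h3.fderiv]
    _ = Dv w g p := by rw [h5]; rfl
end periodic

section slice2
variable {n : ℕ} {g : EE n → ℝ}

/-- second-order slice-to-joint conversion, on the half-space t < 0 -/
lemma pd2_slice (hg : ContDiffOn ℝ (⊤:ℕ∞) g (Set.Iio 0 ×ˢ Set.univ)) {t : ℝ}
    (ht : t < 0) (x : Fin n → ℝ) (i j : Fin n) :
    pd i (pd j (fun y => g (t, y))) x = Dv (ev n i) (Dv (ev n j) g) (t, x) := by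
  have hU : IsOpen (Set.Iio (0:ℝ) ×ˢ (Set.univ : Set (Fin n → ℝ))) :=
    isOpen_Iio.prod isOpen_univ
  have hmem : ∀ y : Fin n → ℝ, ((t, y) : EE n) ∈ Set.Iio (0:ℝ) ×ˢ (Set.univ : Set (Fin n → ℝ)) :=
    fun y => ⟨ht, trivial⟩
  have h1 : pd j (fun y => g (t, y)) = fun y => Dv (ev n j) g (t, y) := by
    funext y
    exact pd_slice (diffAt_of_smooth hU hg (hmem y)) j
  rw [h1]
  exact pd_slice (diffAt_of_smooth hU (Dv_smooth hU hg (ev n j)) (hmem x)) i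
end slice2

section maxprin
variable {n : ℕ}

lemma line_mem (p : EE n) (hp1 : p.1 < 0) (i : Fin n) (r : ℝ) :
    p + r • ev n i ∈ (Set.Iio (0:ℝ) ×ˢ (Set.univ : Set (Fin n → ℝ))) := by
  refine ⟨?_, trivial⟩
  show (p + r • ev n i).1 < 0
  simp [ev, hp1]

lemma line_eq (p : EE n) (i : Fin n) (r : ℝ) :
    p + r • ev n i = (p.1, p.2 + r • (Pi.single i 1 : Fin n → ℝ)) := by
  have h1 : r • ev n i = (((0:ℝ)), r • (Pi.single i 1 : Fin n → ℝ)) := by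
    unfold ev
    rw [Prod.smul_mk, smul_zero]
  rw [h1]
  refine Prod.ext_iff.2 ⟨?_, ?_⟩
  · rw [Prod.fst_add]
    norm_num
  · rw [Prod.snd_add]

set_option maxHeartbeats 1000000 in
theorem max_principle (hn : 1 ≤ n) {v : EE n → ℝ}
    (hv : ContDiffOn ℝ (⊤:ℕ∞) v (Set.Iio (0:ℝ) ×ˢ Set.univ))
    (hPDE : ∀ p ∈ (Set.Iio (0:ℝ) ×ˢ (Set.univ : Set (Fin n → ℝ))), Dv (et n) v p
      = -(∑ j, Dv (ev n j) (Dv (ev n j) v) p) + ∑ j, (Dv (ev n j) v p)^2)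
    (hperF : ∀ p ∈ (Set.Iio (0:ℝ) ×ˢ (Set.univ : Set (Fin n → ℝ))), ∀ m : Fin n → ℤ,
      Fq v (p + (((0:ℝ), fun i => (m i : ℝ)) : EE n)) = Fq v p)
    {t₀ ε : ℝ} (ht₀ : t₀ < 0) (hε : 0 < ε) (hεt : ε < -t₀)
    {x : Fin n → ℝ} (hx : x ∈ Set.Icc (0:Fin n→ℝ) 1) :
    (-t₀ - ε) * Fq v (t₀, x) ≤ 2 * n := by
  have hUo : IsOpen (Set.Iio (0:ℝ) ×ˢ (Set.univ : Set (Fin n → ℝ))) :=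
    isOpen_Iio.prod isOpen_univ
  have hnR : (1:ℝ) ≤ (n:ℝ) := by exact_mod_cast hn
  have s1 : ∀ j, ContDiffOn ℝ (⊤:ℕ∞) (Dv (ev n j) v) (Set.Iio (0:ℝ) ×ˢ Set.univ) :=
    fun j => Dv_smooth hUo hv _
  have s2 : ∀ i j, ContDiffOn ℝ (⊤:ℕ∞) (Dv (ev n i) (Dv (ev n j) v))
      (Set.Iio (0:ℝ) ×ˢ Set.univ) := fun i j => Dv_smooth hUo (s1 j) _
  have sFq : ContDiffOn ℝ (⊤:ℕ∞) (Fq v) (Set.Iio (0:ℝ) ×ˢ Set.univ) := by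
    unfold Fq
    exact (contDiffOn_const.mul (ContDiffOn.sum fun i _ => s2 i i)).sub
      (ContDiffOn.sum fun i _ => (s1 i).pow 2)
  have hA : ContDiff ℝ (⊤:ℕ∞) (fun p : EE n => -p.1 - ε) :=
    (contDiff_fst.neg).sub contDiff_const
  have hGsm : ContDiffOn ℝ (⊤:ℕ∞) (fun p : EE n => (-p.1 - ε) * Fq v p)
      (Set.Iio (0:ℝ) ×ˢ Set.univ) := (hA.contDiffOn).mul sFq
  set G : EE n → ℝ := fun p => (-p.1 - ε) * Fq v p with hGdef
  set K : Set (EE n) := (Set.Icc t₀ (-ε)) ×ˢ (Set.Icc (0:Fin n→ℝ) 1) with hKdef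
  have hKU : K ⊆ Set.Iio (0:ℝ) ×ˢ Set.univ := by
    rintro ⟨t, y⟩ ⟨ht, -⟩
    exact ⟨lt_of_le_of_lt ht.2 (by linarith), trivial⟩
  have hKc : IsCompact K := isCompact_Icc.prod isCompact_Icc
  have ht₀ε : t₀ < -ε := by linarith
  have htx : ((t₀, x) : EE n) ∈ K := ⟨⟨le_refl _, le_of_lt ht₀ε⟩, hx⟩
  obtain ⟨ps, hpsK, hmax⟩ := hKc.exists_isMaxOn ⟨(t₀,x), htx⟩ (hGsm.continuousOn.mono hKU)
  suffices hM : G ps ≤ 2*n by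
    calc (-t₀ - ε) * Fq v (t₀,x) = G (t₀,x) := rfl
      _ ≤ G ps := hmax htx
      _ ≤ 2*n := hM
  by_contra hM
  push_neg at hM
  set M := G ps with hMdef
  have hMpos : 0 < M := by nlinarith
  have hps1 : ps.1 ∈ Set.Icc t₀ (-ε) := hpsK.1
  have hps2 : ps.2 ∈ Set.Icc (0:Fin n→ℝ) 1 := hpsK.2
  have hps1lt : ps.1 < -ε := by
    rcases lt_or_eq_of_le hps1.2 with h | h
    · exact h
    · exfalso
      have : M = 0 := by rw [hMdef, hGdef]; simp only; rw [h]; ring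
      linarith
  have hs'pos : 0 < -ps.1 - ε := by linarith
  have hps0 : ps.1 < 0 := by linarith
  have hpsU : ps ∈ Set.Iio (0:ℝ) ×ˢ (Set.univ : Set (Fin n → ℝ)) := ⟨hps0, trivial⟩
  -- global spatial maximality
  have hglob : ∀ y : Fin n → ℝ, G (ps.1, y) ≤ M := by
    intro y
    set z : Fin n → ℝ := fun i => Int.fract (y i) with hz
    set m : Fin n → ℤ := fun i => ⌊y i⌋ with hm
    have hzy : z + (fun i => (m i : ℝ)) = y := by
      funext i
      show Int.fract (y i) + (⌊y i⌋ : ℝ) = y i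
      rw [Int.fract]; ring
    have hz01 : z ∈ Set.Icc (0:Fin n→ℝ) 1 := by
      constructor
      · intro i; exact Int.fract_nonneg (y i)
      · intro i; exact le_of_lt (Int.fract_lt_one (y i))
    have hzU : ((ps.1, z) : EE n) ∈ Set.Iio (0:ℝ) ×ˢ (Set.univ : Set (Fin n → ℝ)) :=
      ⟨hps0, trivial⟩
    have hFeq : Fq v (ps.1, y) = Fq v (ps.1, z) := by
      have := hperF (ps.1, z) hzU m
      have heq : ((ps.1, z) : EE n) + (((0:ℝ), fun i => (m i : ℝ)) : EE n) = (ps.1, y) := by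
        ext
        · show ps.1 + 0 = ps.1; ring
        · show z _ + _ = y _
          exact congrFun hzy _
      rw [heq] at this
      exact this.symm ▸ rfl
    have : G (ps.1, y) = G (ps.1, z) := by rw [hGdef]; simp only; rw [hFeq]
    rw [this]
    exact hmax ⟨hps1, hz01⟩
  -- spatial first and second derivative tests
  have hDGi : ∀ i, Dv (ev n i) G ps = 0 := by
    intro i
    have hφd : ∀ r : ℝ, HasDerivAt (fun r' : ℝ => G (ps + r' • ev n i))
        (Dv (ev n i) G (ps + r • ev n i)) r :=
      fun r => hasDerivAt_line _ (diffAt_of_smooth hUo hGsm (line_mem ps hps0 i r))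
    have hφmax : IsLocalMax (fun r' : ℝ => G (ps + r' • ev n i)) (0:ℝ) := by
      apply Filter.Eventually.of_forall
      intro r
      show G (ps + r • ev n i) ≤ G (ps + (0:ℝ) • ev n i)
      rw [line_eq, line_eq]
      simp only [zero_smul, add_zero]
      calc G (ps.1, ps.2 + r • (Pi.single i 1 : Fin n → ℝ)) ≤ M := hglob _
        _ = G (ps.1, ps.2) := by rw [hMdef, Prod.mk.eta]
    have h0 := hφmax.deriv_eq_zero
    rw [(hφd 0).deriv] at h0
    simpa using h0
  have hDDGi : ∀ i, Dv (ev n i) (Dv (ev n i) G) ps ≤ 0 := by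
    intro i
    have hφd : ∀ r : ℝ, HasDerivAt (fun r' : ℝ => G (ps + r' • ev n i))
        (Dv (ev n i) G (ps + r • ev n i)) r :=
      fun r => hasDerivAt_line _ (diffAt_of_smooth hUo hGsm (line_mem ps hps0 i r))
    have hφmax : IsLocalMax (fun r' : ℝ => G (ps + r' • ev n i)) (0:ℝ) := by
      apply Filter.Eventually.of_forall
      intro r
      show G (ps + r • ev n i) ≤ G (ps + (0:ℝ) • ev n i)
      rw [line_eq, line_eq]
      simp only [zero_smul, add_zero]
      calc G (ps.1, ps.2 + r • (Pi.single i 1 : Fin n → ℝ)) ≤ M := hglob _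
        _ = G (ps.1, ps.2) := by rw [hMdef, Prod.mk.eta]
    have hderiv_eq : deriv (fun r' : ℝ => G (ps + r' • ev n i))
        = fun r => Dv (ev n i) G (ps + r • ev n i) := funext fun r => (hφd r).deriv
    have hψd : ∀ r : ℝ, HasDerivAt (fun r' : ℝ => Dv (ev n i) G (ps + r' • ev n i))
        (Dv (ev n i) (Dv (ev n i) G) (ps + r • ev n i)) r :=
      fun r => hasDerivAt_line _
        (diffAt_of_smooth hUo (Dv_smooth hUo hGsm _) (line_mem ps hps0 i r))
    have h2 := second_deriv_nonpos_of_isLocalMax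
      (Filter.Eventually.of_forall (fun r => (hφd r).differentiableAt))
      (by rw [hderiv_eq]; exact (hψd 0).differentiableAt) hφmax
    rw [hderiv_eq, (hψd 0).deriv] at h2
    simpa using h2
  -- time derivative test
  have hψtd : ∀ s : ℝ, s < 0 → HasDerivAt (fun s' : ℝ => G (s', ps.2))
      (Dv (et n) G (s, ps.2)) s := by
    intro s hs
    have ha : HasDerivAt (fun s' : ℝ => ((s', ps.2) : EE n)) ((1:ℝ), (0:Fin n → ℝ)) s := by
      simpa using ((hasDerivAt_id s).prodMk (hasDerivAt_const s ps.2))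
    exact (diffAt_of_smooth hUo hGsm
      (show ((s, ps.2) : EE n) ∈ Set.Iio (0:ℝ) ×ˢ (Set.univ : Set (Fin n → ℝ)) from
        ⟨hs, trivial⟩)).hasFDerivAt.comp_hasDerivAt s ha
  have hDGt : Dv (et n) G ps ≤ 0 := by
    rcases lt_or_eq_of_le hps1.1 with h | h
    · -- interior local max in time
      have hloc : IsLocalMax (fun s' : ℝ => G (s', ps.2)) ps.1 := by
        filter_upwards [isOpen_Ioo.mem_nhds (Set.mem_Ioo.2 ⟨h, hps1lt⟩)] with s hs
        calc G (s, ps.2) ≤ M := hmax ⟨⟨le_of_lt hs.1, le_of_lt hs.2⟩, hps2⟩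
          _ = G (ps.1, ps.2) := by rw [hMdef, Prod.mk.eta]
      have h0 := hloc.deriv_eq_zero
      rw [(hψtd ps.1 hps0).deriv] at h0
      rw [Prod.mk.eta] at h0
      rw [h0]
    · -- left endpoint
      have hend := endpoint_deriv_nonpos (h := fun s' : ℝ => G (s', ps.2)) ht₀ε
        ((hψtd t₀ ht₀).differentiableAt) ?_
      · rw [(hψtd t₀ ht₀).deriv] at hend
        rw [h] at hend
        rw [Prod.mk.eta] at hend
        exact hend
      · intro s hs
        calc G (s, ps.2) ≤ M := hmax ⟨hs, hps2⟩
          _ = G (t₀, ps.2) := by rw [hMdef, ← Prod.mk.eta (p := ps), ← h]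
  -- product rule decompositions
  have hAd : ∀ q : EE n, HasFDerivAt (fun p : EE n => -p.1 - ε)
      (-(ContinuousLinearMap.fst ℝ ℝ (Fin n → ℝ))) q :=
    fun q => (hasFDerivAt_fst.neg).sub_const ε
  have hAdiff : ∀ q : EE n, DifferentiableAt ℝ (fun p : EE n => -p.1 - ε) q :=
    fun q => (hAd q).differentiableAt
  have hDvA : ∀ (q w : EE n), Dv w (fun p : EE n => -p.1 - ε) q = -w.1 :=
    fun q w => by rw [Dv_hasFDerivAt (hAd q) w]; simp
  have hG1 : ∀ (w : EE n), ∀ q ∈ (Set.Iio (0:ℝ) ×ˢ (Set.univ : Set (Fin n → ℝ))),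
      Dv w G q = (-q.1 - ε) * Dv w (Fq v) q + (-w.1) * Fq v q := by
    intro w q hq
    rw [hGdef]
    rw [Dv_mul (hAdiff q) (diffAt_of_smooth hUo sFq hq), hDvA q w]
  have hDFq0 : ∀ i, Dv (ev n i) (Fq v) ps = 0 := by
    intro i
    have h1 := hG1 (ev n i) ps hpsU
    rw [hDGi i] at h1
    have h2 : -(ev n i).1 = (0:ℝ) := by simp [ev]
    rw [h2, zero_mul, add_zero] at h1
    exact (mul_eq_zero.1 h1.symm).resolve_left (ne_of_gt hs'pos)
  have hG1i : ∀ i, Set.EqOn (Dv (ev n i) G)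
      (fun q => (-q.1 - ε) * Dv (ev n i) (Fq v) q + (-(ev n i).1) * Fq v q)
      (Set.Iio (0:ℝ) ×ˢ (Set.univ : Set (Fin n → ℝ))) := fun i q hq => hG1 (ev n i) q hq
  have hDDFq : ∀ i, Dv (ev n i) (Dv (ev n i) G) ps
      = (-ps.1 - ε) * Dv (ev n i) (Dv (ev n i) (Fq v)) ps := by
    intro i
    rw [Dv_congr hUo (hG1i i) hpsU]
    have hd1 : DifferentiableAt ℝ (fun q : EE n => (-q.1 - ε) * Dv (ev n i) (Fq v) q) ps :=
      (hAdiff ps).mul (diffAt_of_smooth hUo (Dv_smooth hUo sFq _) hpsU)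
    have hd2 : DifferentiableAt ℝ (fun q : EE n => (-(ev n i).1) * Fq v q) ps :=
      (diffAt_of_smooth hUo sFq hpsU).const_mul _
    rw [Dv_add hd1 hd2,
      Dv_mul (hAdiff ps) (diffAt_of_smooth hUo (Dv_smooth hUo sFq _) hpsU),
      Dv_const_mul _ (diffAt_of_smooth hUo sFq hpsU), hDvA, hDFq0 i]
    simp [ev]
  have hsumDD : ∑ i, Dv (ev n i) (Dv (ev n i) (Fq v)) ps ≤ 0 := by
    have h1 : ∑ i, Dv (ev n i) (Dv (ev n i) G) ps ≤ 0 :=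
      Finset.sum_nonpos (fun i _ => hDDGi i)
    have h2 : ∑ i, Dv (ev n i) (Dv (ev n i) G) ps
        = (-ps.1 - ε) * ∑ i, Dv (ev n i) (Dv (ev n i) (Fq v)) ps := by
      rw [Finset.mul_sum]
      exact Finset.sum_congr rfl fun i _ => hDDFq i
    rw [h2] at h1
    by_contra hpos
    push_neg at hpos
    nlinarith [mul_pos hs'pos hpos]
  have hGt_eq := hG1 (et n) ps hpsU
  have het1 : -(et n).1 = (-1:ℝ) := by simp [et]
  rw [het1] at hGt_eq
  have hkey := key_identity hUo hv hPDE hpsU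
  have hmid : ∑ i, Dv (ev n i) v ps * Dv (ev n i) (Fq v) ps = 0 :=
    Finset.sum_eq_zero fun i _ => by rw [hDFq0 i, mul_zero]
  rw [hmid] at hkey
  set S := ∑ i, ∑ j, (Dv (ev n i) (Dv (ev n j) v) ps)^2 with hSdef
  set T := ∑ i, Dv (ev n i) (Dv (ev n i) (Fq v)) ps with hTdef
  have hkey' : Dv (et n) (Fq v) ps = -T + 2*S := by rw [hkey]; ring
  have hMeq : M = (-ps.1 - ε) * Fq v ps := by rw [hMdef, hGdef]
  have hFqpos : 0 < Fq v ps := by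
    by_contra hno
    push_neg at hno
    nlinarith [mul_nonneg (le_of_lt hs'pos) (neg_nonneg.2 hno)]
  -- trace inequality
  have hdiag : ∀ i, (Dv (ev n i) (Dv (ev n i) v) ps)^2
      ≤ ∑ j, (Dv (ev n i) (Dv (ev n j) v) ps)^2 :=
    fun i => Finset.single_le_sum (f := fun j => (Dv (ev n i) (Dv (ev n j) v) ps)^2)
      (fun j _ => sq_nonneg _) (Finset.mem_univ i)
  have hS1 : ∑ i, (Dv (ev n i) (Dv (ev n i) v) ps)^2 ≤ S :=
    Finset.sum_le_sum fun i _ => hdiag i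
  have hCS : (∑ i, Dv (ev n i) (Dv (ev n i) v) ps)^2
      ≤ (n:ℝ) * ∑ i, (Dv (ev n i) (Dv (ev n i) v) ps)^2 := by
    have := sq_sum_le_card_mul_sum_sq (s := (Finset.univ : Finset (Fin n)))
      (f := fun i => Dv (ev n i) (Dv (ev n i) v) ps)
    simpa using this
  have hFq_eq : Fq v ps = 2 * (∑ i, Dv (ev n i) (Dv (ev n i) v) ps)
      - ∑ i, (Dv (ev n i) v ps)^2 := rfl
  have ha2 : 0 ≤ ∑ i, (Dv (ev n i) v ps)^2 :=
    Finset.sum_nonneg fun i _ => sq_nonneg _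
  have hB : Fq v ps / 2 ≤ ∑ i, Dv (ev n i) (Dv (ev n i) v) ps := by linarith
  have hnpos : (0:ℝ) < n := lt_of_lt_of_le one_pos hnR
  have hSb : (Fq v ps)^2 / 4 ≤ (n:ℝ) * S := by
    have h1 : (Fq v ps)^2 / 4 ≤ (∑ i, Dv (ev n i) (Dv (ev n i) v) ps)^2 := by
      nlinarith [hB, hFqpos]
    calc (Fq v ps)^2/4 ≤ (∑ i, Dv (ev n i) (Dv (ev n i) v) ps)^2 := h1
      _ ≤ (n:ℝ) * ∑ i, (Dv (ev n i) (Dv (ev n i) v) ps)^2 := hCS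
      _ ≤ (n:ℝ) * S := mul_le_mul_of_nonneg_left hS1 (le_of_lt hnpos)
  have hSpos : 0 < S := by
    by_contra h
    push_neg at h
    have h4 : (0:ℝ) < (Fq v ps)^2/4 := div_pos (pow_pos hFqpos 2) (by norm_num)
    linarith [hSb, mul_nonpos_of_nonneg_of_nonpos (le_of_lt hnpos) h]
  rw [hGt_eq, hkey'] at hDGt
  have hx1 : (-ps.1 - ε) * (-T + 2*S)
      = (-ps.1 - ε) * (-T) + (-ps.1 - ε) * (2*S) := by ring
  rw [hx1] at hDGt
  have hx2 : 0 ≤ (-ps.1 - ε) * (-T) :=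
    mul_nonneg (le_of_lt hs'pos) (neg_nonneg.2 hsumDD)
  have e1 : (-ps.1 - ε) * (2*S) ≤ Fq v ps := by linarith
  have hA1 : ((-ps.1 - ε) * (2*S)) * Fq v ps ≤ Fq v ps * Fq v ps :=
    mul_le_mul_of_nonneg_right e1 (le_of_lt hFqpos)
  have hA2 : Fq v ps * Fq v ps ≤ 4*(n:ℝ)*S := by
    have : Fq v ps * Fq v ps = (Fq v ps)^2 := by ring
    rw [this]
    linarith [hSb]
  have hfin : (-ps.1 - ε) * Fq v ps ≤ 2*(n:ℝ) := by
    have h2S : (0:ℝ) < 2*S := by linarith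
    have h3 : ((-ps.1 - ε) * Fq v ps) * (2*S) ≤ (2*(n:ℝ)) * (2*S) := by
      calc ((-ps.1 - ε) * Fq v ps) * (2*S) = ((-ps.1 - ε) * (2*S)) * Fq v ps := by ring
        _ ≤ Fq v ps * Fq v ps := hA1
        _ ≤ 4*(n:ℝ)*S := hA2
        _ = (2*(n:ℝ)) * (2*S) := by ring
    exact le_of_mul_le_mul_right h3 h2S
  rw [hMeq] at hM
  linarith
end maxprin

/-- Proposition 5.1: for a positive periodic solution of the backward heat equation
`∂f/∂t = −Δf` (on `t < 0`, with `τ = −t`), `u = −ln f` satisfies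
`2Δu − |∇u|² − 2n/τ ≤ 0`. -/
theorem backward_harnack_H_nonpos
    (n : ℕ) (hn : 1 ≤ n) (f : ℝ → (Fin n → ℝ) → ℝ)
    (hsmooth : ContDiffOn ℝ (⊤ : ℕ∞) (fun p : ℝ × (Fin n → ℝ) => f p.1 p.2)
      (Set.Iio 0 ×ˢ Set.univ))
    (hpos : ∀ t < (0:ℝ), ∀ x : Fin n → ℝ, 0 < f t x)
    (hbheat : ∀ t < (0:ℝ), ∀ x : Fin n → ℝ, deriv (fun s => f s x) t = -lap (f t) x)
    (hper : ∀ t < (0:ℝ), ∀ x : Fin n → ℝ, ∀ m : Fin n → ℤ,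
      f t (x + fun i => (m i : ℝ)) = f t x)
    (u : ℝ → (Fin n → ℝ) → ℝ) (hu : ∀ t x, u t x = -Real.log (f t x)) :
    ∀ t < (0:ℝ), ∀ x : Fin n → ℝ,
      2 * lap (u t) x - gradSq (u t) x - 2 * n / (-t) ≤ 0 := by
  intro t ht x
  have hUo : IsOpen (Set.Iio (0:ℝ) ×ˢ (Set.univ : Set (Fin n → ℝ))) :=
    isOpen_Iio.prod isOpen_univ
  -- joint function and its smoothness
  have hfpos : ∀ p : EE n, p ∈ (Set.Iio (0:ℝ) ×ˢ (Set.univ : Set (Fin n → ℝ))) →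
      0 < f p.1 p.2 := fun p hp => hpos p.1 hp.1 p.2
  have hvsm : ContDiffOn ℝ (⊤:ℕ∞) (fun p : EE n => -Real.log (f p.1 p.2))
      (Set.Iio (0:ℝ) ×ˢ (Set.univ : Set (Fin n → ℝ))) :=
    (hsmooth.log (fun p hp => ne_of_gt (hfpos p hp))).neg
  have hfdiff : ∀ {p : EE n}, p ∈ (Set.Iio (0:ℝ) ×ˢ (Set.univ : Set (Fin n → ℝ))) →
      DifferentiableAt ℝ (fun p : EE n => f p.1 p.2) p :=
    fun hp => diffAt_of_smooth hUo hsmooth hp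
  -- joint heat equation for f
  have hPDEf : ∀ p ∈ (Set.Iio (0:ℝ) ×ˢ (Set.univ : Set (Fin n → ℝ))),
      Dv (et n) (fun p : EE n => f p.1 p.2) p
        = -(∑ i, Dv (ev n i) (Dv (ev n i) (fun p : EE n => f p.1 p.2)) p) := by
    rintro ⟨s, y⟩ ⟨hs, -⟩
    have h1 : deriv (fun s' => f s' y) s
        = Dv (et n) (fun p : EE n => f p.1 p.2) (s, y) :=
      deriv_slice (hfdiff ⟨hs, trivial⟩)
    have h2 : lap (f s) y
        = ∑ i, Dv (ev n i) (Dv (ev n i) (fun p : EE n => f p.1 p.2)) (s, y) := by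
      unfold lap
      exact Finset.sum_congr rfl fun i _ => pd2_slice hsmooth hs y i i
    rw [← h1, hbheat s hs y, h2]
  -- PDE for v = -log f
  have hPDEv : ∀ p ∈ (Set.Iio (0:ℝ) ×ˢ (Set.univ : Set (Fin n → ℝ))),
      Dv (et n) (fun p : EE n => -Real.log (f p.1 p.2)) p
        = -(∑ j, Dv (ev n j) (Dv (ev n j) (fun p : EE n => -Real.log (f p.1 p.2))) p)
          + ∑ j, (Dv (ev n j) (fun p : EE n => -Real.log (f p.1 p.2)) p)^2 := by
    intro p hp
    have hfp : 0 < f p.1 p.2 := hfpos p hp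
    have hfne : f p.1 p.2 ≠ 0 := ne_of_gt hfp
    have hDlog : ∀ (q : EE n), q ∈ (Set.Iio (0:ℝ) ×ˢ (Set.univ : Set (Fin n → ℝ))) →
        ∀ w, Dv w (fun p : EE n => -Real.log (f p.1 p.2)) q
          = -(f q.1 q.2)⁻¹ * Dv w (fun p : EE n => f p.1 p.2) q :=
      fun q hq w => Dv_neg_log (hfdiff hq) (hfpos q hq)
    have hDDv : ∀ j, Dv (ev n j) (Dv (ev n j) (fun p : EE n => -Real.log (f p.1 p.2))) p
        = -(f p.1 p.2)⁻¹ * Dv (ev n j) (Dv (ev n j) (fun p : EE n => f p.1 p.2)) p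
          + ((f p.1 p.2)^2)⁻¹ * Dv (ev n j) (fun p : EE n => f p.1 p.2) p
            * Dv (ev n j) (fun p : EE n => f p.1 p.2) p := by
      intro j
      have hEq : Set.EqOn (Dv (ev n j) (fun p : EE n => -Real.log (f p.1 p.2)))
          (fun q => (fun q' : EE n => -(f q'.1 q'.2)⁻¹) q
            * Dv (ev n j) (fun p : EE n => f p.1 p.2) q)
          (Set.Iio (0:ℝ) ×ˢ (Set.univ : Set (Fin n → ℝ))) := by
        intro q hq
        rw [hDlog q hq]
      rw [Dv_congr hUo hEq hp]
      have hdinv : DifferentiableAt ℝ (fun q' : EE n => -(f q'.1 q'.2)⁻¹) p :=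
        (((hfdiff hp).inv hfne).neg)
      have hdDf : DifferentiableAt ℝ (Dv (ev n j) (fun p : EE n => f p.1 p.2)) p :=
        diffAt_of_smooth hUo (Dv_smooth hUo hsmooth _) hp
      rw [Dv_mul hdinv hdDf]
      have hDvinv : Dv (ev n j) (fun q' : EE n => -(f q'.1 q'.2)⁻¹) p
          = ((f p.1 p.2)^2)⁻¹ * Dv (ev n j) (fun p : EE n => f p.1 p.2) p := by
        rw [show (fun q' : EE n => -(f q'.1 q'.2)⁻¹)
            = (fun q' : EE n => -((fun q'' : EE n => (f q''.1 q''.2)⁻¹) q')) from rfl]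
        rw [Dv_neg, Dv_inv (hfdiff hp) hfne]
        ring
      rw [hDvinv]
    have hLHS : Dv (et n) (fun p : EE n => -Real.log (f p.1 p.2)) p
        = (f p.1 p.2)⁻¹ * ∑ j, Dv (ev n j) (Dv (ev n j) (fun p : EE n => f p.1 p.2)) p := by
      rw [hDlog p hp, hPDEf p hp]
      ring
    rw [hLHS]
    have hsq : ∀ j, (Dv (ev n j) (fun p : EE n => -Real.log (f p.1 p.2)) p)^2
        = (((f p.1 p.2)^2)⁻¹) * Dv (ev n j) (fun p : EE n => f p.1 p.2) p
          * Dv (ev n j) (fun p : EE n => f p.1 p.2) p := by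
      intro j
      rw [hDlog p hp]
      field_simp
    rw [show (∑ j, (Dv (ev n j) (fun p : EE n => -Real.log (f p.1 p.2)) p)^2)
        = ∑ j, (((f p.1 p.2)^2)⁻¹) * Dv (ev n j) (fun p : EE n => f p.1 p.2) p
          * Dv (ev n j) (fun p : EE n => f p.1 p.2) p from
      Finset.sum_congr rfl fun j _ => hsq j]
    rw [show (∑ j, Dv (ev n j) (Dv (ev n j) (fun p : EE n => -Real.log (f p.1 p.2))) p)
        = ∑ j, (-(f p.1 p.2)⁻¹ * Dv (ev n j) (Dv (ev n j) (fun p : EE n => f p.1 p.2)) p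
          + ((f p.1 p.2)^2)⁻¹ * Dv (ev n j) (fun p : EE n => f p.1 p.2) p
            * Dv (ev n j) (fun p : EE n => f p.1 p.2) p) from
      Finset.sum_congr rfl fun j _ => hDDv j]
    rw [Finset.sum_add_distrib]
    have hthis : ∑ j, -(f p.1 p.2)⁻¹ * Dv (ev n j) (Dv (ev n j) (fun p : EE n => f p.1 p.2)) p
        = -(f p.1 p.2)⁻¹ * ∑ j, Dv (ev n j) (Dv (ev n j) (fun p : EE n => f p.1 p.2)) p := by
      rw [Finset.mul_sum]
    rw [hthis]
    ring
  -- periodicity of v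
  have hperv : ∀ (m : Fin n → ℤ), ∀ p ∈ (Set.Iio (0:ℝ) ×ˢ (Set.univ : Set (Fin n → ℝ))),
      (fun p : EE n => -Real.log (f p.1 p.2)) (p + (((0:ℝ), fun i => (m i : ℝ)) : EE n))
        = (fun p : EE n => -Real.log (f p.1 p.2)) p := by
    intro m p hp
    show -Real.log (f (p.1 + 0) (p.2 + fun i => (m i : ℝ))) = -Real.log (f p.1 p.2)
    rw [add_zero, hper p.1 hp.1 p.2 m]
  have hmemtr : ∀ (m : Fin n → ℤ), ∀ p : EE n,
      p ∈ (Set.Iio (0:ℝ) ×ˢ (Set.univ : Set (Fin n → ℝ))) →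
      p + (((0:ℝ), fun i => (m i : ℝ)) : EE n)
        ∈ (Set.Iio (0:ℝ) ×ˢ (Set.univ : Set (Fin n → ℝ))) := by
    intro m p hp
    refine ⟨?_, trivial⟩
    show p.1 + 0 < 0
    rw [add_zero]
    exact hp.1
  -- periodicity of Fq v
  have hperF : ∀ p ∈ (Set.Iio (0:ℝ) ×ˢ (Set.univ : Set (Fin n → ℝ))), ∀ m : Fin n → ℤ,
      Fq (fun p : EE n => -Real.log (f p.1 p.2))
        (p + (((0:ℝ), fun i => (m i : ℝ)) : EE n))
      = Fq (fun p : EE n => -Real.log (f p.1 p.2)) p := by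
    intro p hp m
    have h1 : ∀ j, Dv (ev n j) (fun p : EE n => -Real.log (f p.1 p.2))
        (p + (((0:ℝ), fun i => (m i : ℝ)) : EE n))
        = Dv (ev n j) (fun p : EE n => -Real.log (f p.1 p.2)) p :=
      fun j => Dv_periodic hUo hvsm (hperv m) hp (hmemtr m p hp) _
    have h1' : ∀ j, ∀ q ∈ (Set.Iio (0:ℝ) ×ˢ (Set.univ : Set (Fin n → ℝ))),
        Dv (ev n j) (fun p : EE n => -Real.log (f p.1 p.2))
          (q + (((0:ℝ), fun i => (m i : ℝ)) : EE n))
        = Dv (ev n j) (fun p : EE n => -Real.log (f p.1 p.2)) q :=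
      fun j q hq => Dv_periodic hUo hvsm (hperv m) hq (hmemtr m q hq) _
    have h2 : ∀ i j, Dv (ev n i) (Dv (ev n j) (fun p : EE n => -Real.log (f p.1 p.2)))
        (p + (((0:ℝ), fun i => (m i : ℝ)) : EE n))
        = Dv (ev n i) (Dv (ev n j) (fun p : EE n => -Real.log (f p.1 p.2))) p :=
      fun i j => Dv_periodic hUo (Dv_smooth hUo hvsm _) (h1' j) hp (hmemtr m p hp) _
    have e1 : ∑ i, Dv (ev n i) (Dv (ev n i) (fun p : EE n => -Real.log (f p.1 p.2)))
        (p + (((0:ℝ), fun i => (m i : ℝ)) : EE n))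
        = ∑ i, Dv (ev n i) (Dv (ev n i) (fun p : EE n => -Real.log (f p.1 p.2))) p :=
      Finset.sum_congr rfl fun i _ => h2 i i
    have e2 : ∑ i, (Dv (ev n i) (fun p : EE n => -Real.log (f p.1 p.2))
        (p + (((0:ℝ), fun i => (m i : ℝ)) : EE n)))^2
        = ∑ i, (Dv (ev n i) (fun p : EE n => -Real.log (f p.1 p.2)) p)^2 :=
      Finset.sum_congr rfl fun i _ => by rw [h1 i]
    unfold Fq
    rw [e1, e2]
  -- reduce x to the unit cube
  have hxcube : ∃ (z : Fin n → ℝ) (m : Fin n → ℤ), z ∈ Set.Icc (0:Fin n → ℝ) 1 ∧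
      (((t, z) : EE n) + (((0:ℝ), fun i => (m i : ℝ)) : EE n)) = (t, x) := by
    refine ⟨fun i => Int.fract (x i), fun i => ⌊x i⌋, ⟨?_, ?_⟩, ?_⟩
    · intro i; exact Int.fract_nonneg (x i)
    · intro i; exact le_of_lt (Int.fract_lt_one (x i))
    · refine Prod.ext_iff.2 ⟨?_, ?_⟩
      · show t + 0 = t; ring
      · show (fun i => Int.fract (x i)) + (fun i => ((⌊x i⌋ : ℤ) : ℝ)) = x
        funext i
        show Int.fract (x i) + (⌊x i⌋ : ℝ) = x i
        rw [Int.fract]; ring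
  obtain ⟨z, m, hz01, hzx⟩ := hxcube
  have htzU : ((t, z) : EE n) ∈ (Set.Iio (0:ℝ) ×ˢ (Set.univ : Set (Fin n → ℝ))) :=
    ⟨ht, trivial⟩
  have hFqtx : Fq (fun p : EE n => -Real.log (f p.1 p.2)) (t, x)
      = Fq (fun p : EE n => -Real.log (f p.1 p.2)) (t, z) := by
    rw [← hzx]
    exact hperF (t, z) htzU m
  -- apply the maximum principle for every ε ∈ (0, -t)
  have hineq : ∀ ε : ℝ, 0 < ε → ε < -t →
      (-t - ε) * Fq (fun p : EE n => -Real.log (f p.1 p.2)) (t, z) ≤ 2 * n :=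
    fun ε hε hεt => max_principle hn hvsm hPDEv hperF ht hε hεt hz01
  -- pass to the limit ε → 0
  have hlim : (-t) * Fq (fun p : EE n => -Real.log (f p.1 p.2)) (t, z) ≤ 2 * n := by
    set F := Fq (fun p : EE n => -Real.log (f p.1 p.2)) (t, z) with hF
    by_contra hcon
    push_neg at hcon
    have hnR : (1:ℝ) ≤ (n:ℝ) := by exact_mod_cast hn
    have hFpos : 0 < F := by nlinarith
    set ε := min ((-t)/2) (((-t)*F - 2*n)/(2*F)) with hεdef
    have hε1 : 0 < ε := by
      apply lt_min
      · linarith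
      · apply div_pos; linarith; linarith
    have hε2 : ε < -t := lt_of_le_of_lt (min_le_left _ _) (by linarith)
    have h3 := hineq ε hε1 hε2
    have h4 : ε * F ≤ (((-t)*F - 2*n)/(2*F)) * F :=
      mul_le_mul_of_nonneg_right (min_le_right _ _) (le_of_lt hFpos)
    have h5 : (((-t)*F - 2*n)/(2*F)) * F = ((-t)*F - 2*n)/2 := by
      field_simp
    nlinarith
  -- convert to slice quantities
  have hut : u t = fun y => (fun p : EE n => -Real.log (f p.1 p.2)) (t, y) := by
    funext y
    exact hu t y
  have hlap : lap (u t) x = ∑ i, Dv (ev n i) (Dv (ev n i)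
      (fun p : EE n => -Real.log (f p.1 p.2))) (t, x) := by
    rw [hut]
    unfold lap
    exact Finset.sum_congr rfl fun i _ => pd2_slice hvsm ht x i i
  have hgrad : gradSq (u t) x = ∑ i, (Dv (ev n i)
      (fun p : EE n => -Real.log (f p.1 p.2)) (t, x))^2 := by
    rw [hut]
    unfold gradSq
    exact Finset.sum_congr rfl fun i _ => by
      rw [pd_slice (diffAt_of_smooth hUo hvsm ⟨ht, trivial⟩) i]
      rfl
  have hFq_slice : 2 * lap (u t) x - gradSq (u t) x
      = Fq (fun p : EE n => -Real.log (f p.1 p.2)) (t, x) := by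
    rw [hlap, hgrad]
    rfl
  rw [hFq_slice, hFqtx]
  have hmt : 0 < -t := by linarith
  rw [sub_nonpos, div_eq_mul_inv]
  rw [← mul_le_mul_iff_left₀ hmt]
  calc Fq (fun p : EE n => -Real.log (f p.1 p.2)) (t, z) * -t
      = (-t) * Fq (fun p : EE n => -Real.log (f p.1 p.2)) (t, z) := by ring
    _ ≤ 2 * n := hlim
    _ = 2 * (n:ℝ) * (-t)⁻¹ * -t := by
        field_simp
        rw [div_self (ne_of_lt ht)]
end
end
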